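/- arXiv:1310.7628 — 8 statements merged into one kernel-verified Lean document; each statement's English description precedes it below -/
import Mathlib

section
/- Let α > 0, λ > 0 and ω > α²/4. Set x̄ := (1/(2√ω))·log((2√ω − α)/(2√ω + α)) and ψ(x) := √(2ω/λ)·sech(√ω(|x| − x̄)). Then: (i) ∫_ℝ ψ(x)² dx = 4√ω/λ − 2α/λ; (ii) (1/2)∫_{ℝ∖{0}} ψ'(x)² dx − (α/2)ψ(0)² − (λ/4)∫_ℝ ψ(x)⁴ dx = −(2/(3λ))ω^{3/2} + α³/(12λ); (iii) the quantity in (ii) plus (ω/2) times the quantity in (i) equals (4/(3λ))ω^{3/2} − αω/λ + α³/(12λ). -/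
open MeasureTheory Real Filter Set Topology

noncomputable section

/-- sech x = 1 / cosh x -/
def sech (x : ℝ) : ℝ := 1 / Real.cosh x

lemma tanh_hasDerivAt (x : ℝ) : HasDerivAt Real.tanh (sech x ^ 2) x := by
  have h := (Real.hasDerivAt_sinh x).div (Real.hasDerivAt_cosh x) (Real.cosh_pos x).ne'
  have hT : Real.tanh = fun y => Real.sinh y / Real.cosh y :=
    funext Real.tanh_eq_sinh_div_cosh
  rw [hT]
  refine h.congr_deriv (Eq.symm ?_)
  simp only [sech, div_pow, one_pow]
  rw [← Real.cosh_sq_sub_sinh_sq x]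
  ring

lemma tanh_tendsto : Tendsto Real.tanh atTop (𝓝 1) := by
  have key : Real.tanh = fun x => (1 - Real.exp (-(2*x))) / (1 + Real.exp (-(2*x))) := by
    funext x
    have e : Real.exp (-(2*x)) = Real.exp (-x) * Real.exp (-x) := by
      rw [← Real.exp_add]; ring_nf
    have h1 : Real.exp x ≠ 0 := (Real.exp_pos x).ne'
    have h2 : (0:ℝ) < Real.exp x + Real.exp (-x) := by positivity
    have h3 : (0:ℝ) < 1 + Real.exp (-(2*x)) := by positivity
    rw [Real.tanh_eq_sinh_div_cosh, Real.sinh_eq, Real.cosh_eq, e]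
    have h4 : Real.exp (-x) = (Real.exp x)⁻¹ := Real.exp_neg x
    rw [h4] at *
    field_simp
  have h0 : Tendsto (fun x : ℝ => Real.exp (-(2*x))) atTop (𝓝 0) := by
    apply Real.tendsto_exp_atBot.comp
    have h1 : Tendsto (fun x : ℝ => 2*x) atTop atTop :=
      Tendsto.const_mul_atTop two_pos tendsto_id
    exact tendsto_neg_atTop_atBot.comp h1
  rw [key]
  have h2 : Tendsto (fun x : ℝ => (1 - Real.exp (-(2*x))) / (1 + Real.exp (-(2*x)))) atTop
      (𝓝 ((1 - 0) / (1 + 0))) :=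
    Tendsto.div (tendsto_const_nhds.sub h0) (tendsto_const_nhds.add h0) (by norm_num)
  simpa using h2

lemma int_key (s a l : ℝ) (hs : 0 < s) (F f : ℝ → ℝ)
    (hF : ∀ u, HasDerivAt F (f u) u) (hf : ∀ u, 0 ≤ f u)
    (hl : Tendsto F atTop (𝓝 l)) :
    ∫ x in Ioi (0:ℝ), f (s*(x-a)) = (l - F (-(s*a)))/s := by
  have hlin : ∀ x : ℝ, HasDerivAt (fun y => s*(y-a)) s x := fun x => by
    simpa using ((hasDerivAt_id x).sub_const a).const_mul s
  have hg : ∀ x : ℝ, HasDerivAt (fun y => s⁻¹ * F (s*(y-a))) (f (s*(x-a))) x := by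
    intro x
    have h := ((hF (s*(x-a))).comp x (hlin x)).const_mul s⁻¹
    refine h.congr_deriv (Eq.symm ?_)
    field_simp
  have htend : Tendsto (fun y => s⁻¹ * F (s*(y-a))) atTop (𝓝 (s⁻¹ * l)) := by
    apply Tendsto.const_mul
    apply hl.comp
    have h1 : Tendsto (fun y : ℝ => y - a) atTop atTop :=
      tendsto_atTop_add_const_right atTop (-a) tendsto_id
    exact Tendsto.const_mul_atTop hs h1
  rw [integral_Ioi_of_hasDerivAt_of_nonneg' (fun x _ => hg x) (fun x _ => hf _) htend]
  rw [show s*((0:ℝ)-a) = -(s*a) by ring]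
  field_simp

lemma tanh_sq (u : ℝ) : Real.tanh u ^ 2 = 1 - sech u ^ 2 := by
  have hc := (Real.cosh_pos u).ne'
  simp only [sech, Real.tanh_eq_sinh_div_cosh, div_pow, one_pow]
  rw [Real.sinh_sq]
  field_simp

lemma F2_hasDerivAt (u : ℝ) :
    HasDerivAt (fun v => Real.tanh v - Real.tanh v^3/3) (sech u ^ 4) u := by
  have h := (tanh_hasDerivAt u).sub (((tanh_hasDerivAt u).pow 3).div_const 3)
  refine h.congr_deriv (Eq.symm ?_)
  have ht := tanh_sq u
  simp only [Nat.cast_ofNat, pow_succ, pow_zero, one_mul] at *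
  nlinarith [ht]

lemma F3_hasDerivAt (u : ℝ) :
    HasDerivAt (fun v => Real.tanh v^3/3) ((sech u * Real.tanh u)^2) u := by
  have h := ((tanh_hasDerivAt u).pow 3).div_const 3
  refine h.congr_deriv (Eq.symm ?_)
  simp only [Nat.cast_ofNat]
  ring

/-- L²-norm, energy and action of the ground state of the cubic NLS
with an attractive Dirac delta potential of strength α. -/
theorem statement1 (α lam ω : ℝ) (hα : 0 < α) (hlam : 0 < lam) (hω : α ^ 2 / 4 < ω)
    (xbar : ℝ)
    (hxbar : xbar = (1 / (2 * Real.sqrt ω)) *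
      Real.log ((2 * Real.sqrt ω - α) / (2 * Real.sqrt ω + α)))
    (ψ : ℝ → ℝ)
    (hψ : ∀ x, ψ x = Real.sqrt (2 * ω / lam) * sech (Real.sqrt ω * (|x| - xbar))) :
    (∫ x : ℝ, (ψ x) ^ 2) = 4 * Real.sqrt ω / lam - 2 * α / lam ∧
    (1 / 2) * (∫ x in ({(0:ℝ)}ᶜ : Set ℝ), (deriv ψ x) ^ 2)
        - (α / 2) * (ψ 0) ^ 2 - (lam / 4) * (∫ x : ℝ, (ψ x) ^ 4)
      = -(2 / (3 * lam)) * ω ^ ((3:ℝ)/2) + α ^ 3 / (12 * lam) ∧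
    ((1 / 2) * (∫ x in ({(0:ℝ)}ᶜ : Set ℝ), (deriv ψ x) ^ 2)
        - (α / 2) * (ψ 0) ^ 2 - (lam / 4) * (∫ x : ℝ, (ψ x) ^ 4))
        + (ω / 2) * (∫ x : ℝ, (ψ x) ^ 2)
      = (4 / (3 * lam)) * ω ^ ((3:ℝ)/2) - α * ω / lam + α ^ 3 / (12 * lam) := by
  have hω0 : 0 < ω := lt_of_le_of_lt (by positivity) hω
  set s := Real.sqrt ω with hsdef
  have hs : 0 < s := Real.sqrt_pos.mpr hω0
  have hs' : s ≠ 0 := hs.ne'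
  have hlam' : lam ≠ 0 := hlam.ne'
  have hω2 : ω = s^2 := (Real.sq_sqrt hω0.le).symm
  have hαs : α < 2*s := by nlinarith
  have hc2 : Real.sqrt (2*ω/lam) ^ 2 = 2*ω/lam := Real.sq_sqrt (by positivity)
  set T := Real.tanh (s * xbar) with hTdef
  -- value of T
  have hT : T = -α/(2*s) := by
    set r := (2*s - α)/(2*s + α) with hrdef
    have hr : (0:ℝ) < r := div_pos (by linarith) (by linarith)
    have hx : s * xbar = (1/2) * Real.log r := by
      rw [hxbar]; field_simp
    have he : Real.exp (s*xbar) ^ 2 = r := by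
      rw [sq, ← Real.exp_add, hx,
        show (1/2) * Real.log r + (1/2) * Real.log r = Real.log r by ring]
      exact Real.exp_log hr
    have hepos : (0:ℝ) < Real.exp (s*xbar) := Real.exp_pos _
    have htanh : T = (Real.exp (s*xbar)^2 - 1)/(Real.exp (s*xbar)^2 + 1) := by
      rw [hTdef, Real.tanh_eq_sinh_div_cosh, Real.sinh_eq, Real.cosh_eq, Real.exp_neg]
      have h1 : Real.exp (s*xbar) ≠ 0 := hepos.ne'
      field_simp
    rw [htanh, he, hrdef]
    have h1 : (0:ℝ) < 2*s + α := by linarith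
    field_simp
    ring
  -- the three half-line integrals
  have I2 : ∫ x in Ioi (0:ℝ), sech (s*(x - xbar))^2 = (1 + T)/s := by
    have h := int_key s xbar 1 hs Real.tanh (fun u => sech u ^ 2) tanh_hasDerivAt
      (fun u => sq_nonneg _) tanh_tendsto
    rw [h, Real.tanh_neg, ← hTdef]
    ring
  have I4 : ∫ x in Ioi (0:ℝ), sech (s*(x - xbar))^4 = (2/3 + T - T^3/3)/s := by
    have h := int_key s xbar (2/3) hs (fun v => Real.tanh v - Real.tanh v^3/3)
      (fun u => sech u ^ 4) F2_hasDerivAt (fun u => by positivity) ?_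
    · rw [h]
      simp only [Real.tanh_neg, ← hTdef]
      ring
    · have h2 := tanh_tendsto.sub ((tanh_tendsto.pow 3).div_const 3)
      norm_num at h2
      exact h2
  have I3 : ∫ x in Ioi (0:ℝ), (sech (s*(x - xbar)) * Real.tanh (s*(x - xbar)))^2
      = (1/3 + T^3/3)/s := by
    have h := int_key s xbar (1/3) hs (fun v => Real.tanh v^3/3)
      (fun u => (sech u * Real.tanh u)^2) F3_hasDerivAt (fun u => sq_nonneg _) ?_
    · rw [h]
      simp only [Real.tanh_neg, ← hTdef]
      ring
    · have h2 := (tanh_tendsto.pow 3).div_const 3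
      norm_num at h2
      exact h2
  -- L² norm
  have h2 : (∫ x : ℝ, ψ x ^ 2) = 2 * ((2*ω/lam) * ((1+T)/s)) := by
    have e1 : (∫ x : ℝ, ψ x ^ 2)
        = ∫ x : ℝ, (fun t => (2*ω/lam) * sech (s*(t - xbar))^2) |x| := by
      congr 1; funext x
      simp only
      rw [hψ x, mul_pow, hc2, mul_sub]
    rw [e1, integral_comp_abs (f := fun t => (2*ω/lam) * sech (s*(t - xbar))^2),
      MeasureTheory.integral_const_mul, I2]
  -- L⁴ norm
  have h4 : (∫ x : ℝ, ψ x ^ 4) = 2 * ((2*ω/lam)^2 * ((2/3 + T - T^3/3)/s)) := by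
    have hc4 : Real.sqrt (2*ω/lam) ^ 4 = (2*ω/lam)^2 := by
      rw [show (4:ℕ) = 2*2 from rfl, pow_mul, hc2]
    have e1 : (∫ x : ℝ, ψ x ^ 4)
        = ∫ x : ℝ, (fun t => (2*ω/lam)^2 * sech (s*(t - xbar))^4) |x| := by
      congr 1; funext x
      simp only
      rw [hψ x, mul_pow, hc4, mul_sub]
    rw [e1, integral_comp_abs (f := fun t => (2*ω/lam)^2 * sech (s*(t - xbar))^4),
      MeasureTheory.integral_const_mul, I4]
  -- pointwise derivative
  have hst : ∀ u : ℝ, sech u * Real.tanh u = Real.sinh u / Real.cosh u ^ 2 := by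
    intro u
    have hc := (Real.cosh_pos u).ne'
    rw [sech, Real.tanh_eq_sinh_div_cosh, div_mul_div_comm, one_mul, sq]
  have hmp : ∀ x : ℝ, x ≠ 0 → deriv ψ x ^ 2
      = (2*ω/lam) * s^2 * (sech (s*(|x| - xbar)) * Real.tanh (s*(|x| - xbar)))^2 := by
    intro x hx
    rcases hx.lt_or_gt with hneg | hpos
    · have hev : ψ =ᶠ[𝓝 x] fun y => Real.sqrt (2*ω/lam) * (Real.cosh (s*(-y - xbar)))⁻¹ := by
        filter_upwards [Iio_mem_nhds hneg] with y hy
        rw [hψ y, abs_of_neg hy, sech, one_div]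
      have hlin : HasDerivAt (fun y : ℝ => s*(-y - xbar)) (-s) x := by
        simpa using (((hasDerivAt_id x).neg).sub_const xbar).const_mul s
      have hcosh := (Real.hasDerivAt_cosh (s*(-x - xbar))).comp x hlin
      have hd := (hcosh.inv (Real.cosh_pos _).ne').const_mul (Real.sqrt (2*ω/lam))
      simp only [Function.comp_def, Pi.inv_apply] at hd
      rw [hev.deriv_eq, hd.deriv, abs_of_neg hneg, hst]
      rw [show Real.sqrt (2*ω/lam) * (-(Real.sinh (s*(-x - xbar)) * (-s)) / Real.cosh (s*(-x - xbar)) ^ 2)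
        = Real.sqrt (2*ω/lam) * (s * (Real.sinh (s*(-x - xbar)) / Real.cosh (s*(-x - xbar)) ^ 2)) by ring]
      rw [mul_pow, hc2, mul_pow]
      ring
    · have hev : ψ =ᶠ[𝓝 x] fun y => Real.sqrt (2*ω/lam) * (Real.cosh (s*(y - xbar)))⁻¹ := by
        filter_upwards [Ioi_mem_nhds hpos] with y hy
        rw [hψ y, abs_of_pos hy, sech, one_div]
      have hlin : HasDerivAt (fun y : ℝ => s*(y - xbar)) s x := by
        simpa using ((hasDerivAt_id x).sub_const xbar).const_mul s
      have hcosh := (Real.hasDerivAt_cosh (s*(x - xbar))).comp x hlin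
      have hd := (hcosh.inv (Real.cosh_pos _).ne').const_mul (Real.sqrt (2*ω/lam))
      simp only [Function.comp_def, Pi.inv_apply] at hd
      rw [hev.deriv_eq, hd.deriv, abs_of_pos hpos, hst]
      rw [show Real.sqrt (2*ω/lam) * (-(Real.sinh (s*(x - xbar)) * s) / Real.cosh (s*(x - xbar)) ^ 2)
        = Real.sqrt (2*ω/lam) * (-(s * (Real.sinh (s*(x - xbar)) / Real.cosh (s*(x - xbar)) ^ 2))) by ring]
      rw [mul_pow, hc2, neg_pow, mul_pow]
      ring
  -- kinetic term
  have hK : (∫ x in ({(0:ℝ)}ᶜ : Set ℝ), deriv ψ x ^ 2)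
      = 2 * ((2*ω/lam) * s^2 * ((1/3 + T^3/3)/s)) := by
    have e1 : (∫ x in ({(0:ℝ)}ᶜ : Set ℝ), deriv ψ x ^ 2)
        = ∫ x in ({(0:ℝ)}ᶜ : Set ℝ),
            (fun t => (2*ω/lam) * s^2 * (sech (s*(t - xbar)) * Real.tanh (s*(t - xbar)))^2) |x| := by
      apply setIntegral_congr_fun (measurableSet_singleton (0:ℝ)).compl
      intro x hx
      simpa [mul_sub] using hmp x hx
    have e2 : ({(0:ℝ)}ᶜ : Set ℝ) =ᵐ[volume] (univ : Set ℝ) := by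
      rw [MeasureTheory.ae_eq_univ]
      simp
    rw [e1, setIntegral_congr_set e2, setIntegral_univ,
      integral_comp_abs (f := fun t => (2*ω/lam) * s^2 * (sech (s*(t - xbar)) * Real.tanh (s*(t - xbar)))^2),
      MeasureTheory.integral_const_mul, I3]
  -- value at 0
  have h0 : ψ 0 ^ 2 = (2*ω/lam) * (1 - T^2) := by
    rw [hψ 0, mul_pow, hc2]
    have e1 : s * (|(0:ℝ)| - xbar) = -(s * xbar) := by
      simp
    rw [e1, show sech (-(s*xbar)) = sech (s*xbar) by simp [sech, Real.cosh_neg]]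
    rw [hTdef, tanh_sq]
    ring
  have hpow : ω ^ ((3:ℝ)/2) = s^3 := by
    rw [show (3:ℝ)/2 = (1/2)*3 by norm_num, Real.rpow_mul hω0.le, ← Real.sqrt_eq_rpow,
      show (3:ℝ) = ((3:ℕ):ℝ) by norm_num, Real.rpow_natCast]
  clear_value T s
  have g1 : (∫ x : ℝ, (ψ x) ^ 2) = 4 * s / lam - 2 * α / lam := by
    rw [h2, hT, hω2]
    field_simp
    ring
  have g2 : (1 / 2) * (∫ x in ({(0:ℝ)}ᶜ : Set ℝ), (deriv ψ x) ^ 2)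
      - (α / 2) * (ψ 0) ^ 2 - (lam / 4) * (∫ x : ℝ, (ψ x) ^ 4)
      = -(2 / (3 * lam)) * ω ^ ((3:ℝ)/2) + α ^ 3 / (12 * lam) := by
    rw [hK, h0, h4, hT, hpow, hω2]
    field_simp
    ring
  refine ⟨g1, g2, ?_⟩
  rw [g2, g1, hpow, hω2]
  field_simp
  ring

end
end

section
/- Fix α > 0 and ρ > 0. For λ > 0, set √ω_λ := λρ/4 + α/2, x̄_λ := (2/(λρ + 2α))·log(λρ/(λρ + 4α)), and φ_λ(x) := √(2ω_λ/λ)·sech(√ω_λ(|x| − x̄_λ)). Let g(x) := √(ρα/2)·e^{−(α/2)|x|}. Then, as λ → 0+, ∫_ℝ |φ_λ(x) − g(x)|² dx + ∫_{ℝ∖{0}} |φ_λ'(x) − g'(x)|² dx → 0; that is, φ_λ converges to g in H¹(ℝ). -/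
open MeasureTheory Real Filter Set Topology

noncomputable section

lemma sech_shift (t y : ℝ) (ht : 0 < t) :
    sech (y - Real.log t / 2) = 2 * Real.sqrt t * Real.exp (-y) / (1 + t * Real.exp (-y) ^ 2) := by
  set s := Real.sqrt t with hs
  have hs0 : 0 < s := Real.sqrt_pos.2 ht
  have hts : t = s ^ 2 := (Real.sq_sqrt ht.le).symm
  have h1 : Real.exp (y - Real.log t / 2) = Real.exp y / s := by
    rw [← Real.log_sqrt ht.le, Real.exp_sub, Real.exp_log hs0]
  have h2 : Real.exp (-(y - Real.log t / 2)) = s / Real.exp y := by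
    rw [neg_sub, ← Real.log_sqrt ht.le, Real.exp_sub, Real.exp_log hs0]
  unfold sech
  rw [Real.cosh_eq, h1, h2, hts, Real.exp_neg]
  have hE : Real.exp y ≠ 0 := (Real.exp_pos y).ne'
  have hden : (0:ℝ) < 1 + s ^ 2 * ((Real.exp y)⁻¹) ^ 2 := by positivity
  field_simp

lemma integrable_exp_neg_abs {c : ℝ} (hc : 0 < c) :
    Integrable (fun x : ℝ => Real.exp (-c * |x|)) := by
  have h1 : IntegrableOn (fun x : ℝ => Real.exp (-c * |x|)) (Ici 0) := by
    have h2 : IntegrableOn (fun x : ℝ => Real.exp (-c * x)) (Ici 0) := by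
      rw [integrableOn_Ici_iff_integrableOn_Ioi]
      exact exp_neg_integrableOn_Ioi 0 hc
    exact h2.congr_fun (fun x hx => by rw [abs_of_nonneg hx]) measurableSet_Ici
  have h2 : IntegrableOn (fun x : ℝ => Real.exp (-c * |x|)) (Iic 0) := by
    have hmp2 : MeasurePreserving (fun x : ℝ => -x)
        (volume.restrict (Ici 0)) (volume.restrict (Iic 0)) := by
      have := (Measure.measurePreserving_neg (volume : Measure ℝ)).restrict_preimage
        (s := Iic (0:ℝ)) measurableSet_Iic
      simpa using this
    have hemb : MeasurableEmbedding (fun x : ℝ => -x) :=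
      (Homeomorph.neg ℝ).measurableEmbedding
    have hco : ((fun x : ℝ => Real.exp (-c * |x|)) ∘ (fun x : ℝ => -x))
        = fun x : ℝ => Real.exp (-c * |x|) := by
      funext x; simp
    exact (hmp2.integrable_comp_emb hemb).1 (by rw [hco]; exact h1)
  have := h2.union h1
  rwa [Iic_union_Ici, integrableOn_univ] at this

lemma hasDerivAt_aux (a b t x : ℝ) (ht : 0 ≤ t) (hx : x ≠ 0) :
    HasDerivAt (fun y => a * Real.exp (-b * |y|) / (1 + t * Real.exp (-b * |y|) ^ 2))
      (-(a * b) * (if 0 < x then 1 else -1) * Real.exp (-b * |x|) *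
        (1 - t * Real.exp (-b * |x|) ^ 2) / (1 + t * Real.exp (-b * |x|) ^ 2) ^ 2) x := by
  rcases hx.lt_or_gt with h | h
  · have habs : (fun y : ℝ => a * Real.exp (-b * |y|) / (1 + t * Real.exp (-b * |y|) ^ 2))
        =ᶠ[𝓝 x] fun y => a * Real.exp (b * y) / (1 + t * Real.exp (b * y) ^ 2) := by
      filter_upwards [Iio_mem_nhds h] with y hy
      rw [abs_of_neg hy]; ring_nf
    have h1 : HasDerivAt (fun y : ℝ => b * y) b x := by
      simpa using (hasDerivAt_id x).const_mul b
    have h2 := h1.exp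
    have h3 := h2.const_mul a
    have h4 : HasDerivAt (fun y : ℝ => 1 + t * Real.exp (b * y) ^ 2)
        (t * (2 * Real.exp (b * x) ^ 1 * (Real.exp (b * x) * b))) x := by
      simpa using ((h2.pow 2).const_mul t).const_add 1
    have hden : (1 + t * Real.exp (b * x) ^ 2) ≠ 0 := by positivity
    have h5 : HasDerivAt (fun y : ℝ => a * Real.exp (b * y) / (1 + t * Real.exp (b * y) ^ 2)) _ x :=
      h3.div h4 hden
    refine HasDerivAt.congr_of_eventuallyEq ?_ habs
    refine h5.congr_deriv ?_
    rw [if_neg (not_lt.2 h.le), abs_of_neg h]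
    have hE : Real.exp (-b * -x) = Real.exp (b * x) := by ring_nf
    rw [hE]
    field_simp
    ring
  · have habs : (fun y : ℝ => a * Real.exp (-b * |y|) / (1 + t * Real.exp (-b * |y|) ^ 2))
        =ᶠ[𝓝 x] fun y => a * Real.exp (-b * y) / (1 + t * Real.exp (-b * y) ^ 2) := by
      filter_upwards [Ioi_mem_nhds h] with y hy
      rw [abs_of_pos hy]
    have h1 : HasDerivAt (fun y : ℝ => -b * y) (-b) x := by
      simpa using (hasDerivAt_id x).const_mul (-b)
    have h2 := h1.exp
    have h3 := h2.const_mul a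
    have h4 : HasDerivAt (fun y : ℝ => 1 + t * Real.exp (-b * y) ^ 2)
        (t * (2 * Real.exp (-b * x) ^ 1 * (Real.exp (-b * x) * -b))) x := by
      simpa using ((h2.pow 2).const_mul t).const_add 1
    have hden : (1 + t * Real.exp (-b * x) ^ 2) ≠ 0 := by positivity
    have h5 : HasDerivAt (fun y : ℝ => a * Real.exp (-b * y) / (1 + t * Real.exp (-b * y) ^ 2)) _ x :=
      h3.div h4 hden
    refine HasDerivAt.congr_of_eventuallyEq ?_ habs
    refine h5.congr_deriv ?_
    rw [if_pos h, abs_of_pos h]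
    field_simp
    ring

/-- closed form of the soliton profile -/
def Pf (α ρ lam x : ℝ) : ℝ :=
  2 * (lam * ρ / 4 + α / 2) * Real.sqrt (2 * ρ / (lam * ρ + 4 * α)) *
      Real.exp (-(lam * ρ / 4 + α / 2) * |x|) /
    (1 + lam * ρ / (lam * ρ + 4 * α) * Real.exp (-(lam * ρ / 4 + α / 2) * |x|) ^ 2)

/-- its derivative away from 0 -/
def Qf (α ρ lam x : ℝ) : ℝ :=
  -(2 * (lam * ρ / 4 + α / 2) * Real.sqrt (2 * ρ / (lam * ρ + 4 * α)) * (lam * ρ / 4 + α / 2)) *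
      (if 0 < x then 1 else -1) * Real.exp (-(lam * ρ / 4 + α / 2) * |x|) *
      (1 - lam * ρ / (lam * ρ + 4 * α) * Real.exp (-(lam * ρ / 4 + α / 2) * |x|) ^ 2) /
    (1 + lam * ρ / (lam * ρ + 4 * α) * Real.exp (-(lam * ρ / 4 + α / 2) * |x|) ^ 2) ^ 2

/-- derivative of the limit -/
def Gd (α ρ x : ℝ) : ℝ :=
  -(Real.sqrt (ρ * α / 2) * (α / 2)) * (if 0 < x then 1 else -1) * Real.exp (-(α / 2) * |x|)

lemma amp_eq (α ρ lam : ℝ) (hα : 0 < α) (hρ : 0 < ρ) (hl : 0 < lam) :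
    Real.sqrt (2 * (lam * ρ / 4 + α / 2) ^ 2 / lam) *
      (2 * Real.sqrt (lam * ρ / (lam * ρ + 4 * α))) =
    2 * (lam * ρ / 4 + α / 2) * Real.sqrt (2 * ρ / (lam * ρ + 4 * α)) := by
  have hb : 0 < lam * ρ / 4 + α / 2 := by positivity
  have hD : 0 < lam * ρ + 4 * α := by positivity
  have h1 : Real.sqrt (2 * (lam * ρ / 4 + α / 2) ^ 2 / lam) *
      (2 * Real.sqrt (lam * ρ / (lam * ρ + 4 * α)))
      = 2 * Real.sqrt ((2 * (lam * ρ / 4 + α / 2) ^ 2 / lam) * (lam * ρ / (lam * ρ + 4 * α))) := by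
    rw [Real.sqrt_mul (by positivity)]; ring
  have h2 : (2 * (lam * ρ / 4 + α / 2) ^ 2 / lam) * (lam * ρ / (lam * ρ + 4 * α))
      = (lam * ρ / 4 + α / 2) ^ 2 * (2 * ρ / (lam * ρ + 4 * α)) := by
    field_simp
  rw [h1, h2, Real.sqrt_mul (by positivity), Real.sqrt_sq hb.le]; ring

lemma phi_form (α ρ lam x : ℝ) (hα : 0 < α) (hρ : 0 < ρ) (hl : 0 < lam) :
    Real.sqrt (2 * (lam * ρ / 4 + α / 2) ^ 2 / lam) *
        sech ((lam * ρ / 4 + α / 2) *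
          (|x| - (2 / (lam * ρ + 2 * α)) * Real.log (lam * ρ / (lam * ρ + 4 * α)))) =
    Pf α ρ lam x := by
  have hD : (0:ℝ) < lam * ρ + 4 * α := by positivity
  have hD2 : (0:ℝ) < lam * ρ + 2 * α := by positivity
  have ht : (0:ℝ) < lam * ρ / (lam * ρ + 4 * α) := by positivity
  have harg : (lam * ρ / 4 + α / 2) *
      (|x| - (2 / (lam * ρ + 2 * α)) * Real.log (lam * ρ / (lam * ρ + 4 * α)))
      = (lam * ρ / 4 + α / 2) * |x| - Real.log (lam * ρ / (lam * ρ + 4 * α)) / 2 := by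
    field_simp; ring
  unfold Pf
  rw [harg, sech_shift _ _ ht, ← amp_eq α ρ lam hα hρ hl, neg_mul]
  ring

lemma hasDerivAt_Pf (α ρ lam x : ℝ) (hα : 0 < α) (hρ : 0 < ρ) (hl : 0 < lam) (hx : x ≠ 0) :
    HasDerivAt (Pf α ρ lam) (Qf α ρ lam x) x := by
  have ht : (0:ℝ) ≤ lam * ρ / (lam * ρ + 4 * α) := by positivity
  unfold Pf Qf
  exact hasDerivAt_aux _ _ _ x ht hx

lemma Pf_bounds (α ρ lam x : ℝ) (hα : 0 < α) (hρ : 0 < ρ) (hl : 0 < lam) (hl1 : lam ≤ 1) :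
    0 ≤ Pf α ρ lam x ∧ Pf α ρ lam x ≤
      2 * (ρ / 4 + α / 2) * Real.sqrt (2 * ρ / (4 * α)) * Real.exp (-(α / 2) * |x|) := by
  have hb0 : (0:ℝ) < lam * ρ / 4 + α / 2 := by positivity
  have hD : (0:ℝ) < lam * ρ + 4 * α := by positivity
  have ht0 : (0:ℝ) ≤ lam * ρ / (lam * ρ + 4 * α) := by positivity
  have hsq : Real.sqrt (2 * ρ / (lam * ρ + 4 * α)) ≤ Real.sqrt (2 * ρ / (4 * α)) := by
    apply Real.sqrt_le_sqrt
    apply div_le_div_of_nonneg_left (by positivity) (by positivity)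
    nlinarith
  have hA0 : (0:ℝ) ≤ 2 * (lam * ρ / 4 + α / 2) * Real.sqrt (2 * ρ / (lam * ρ + 4 * α)) := by
    positivity
  have hAle : 2 * (lam * ρ / 4 + α / 2) * Real.sqrt (2 * ρ / (lam * ρ + 4 * α))
      ≤ 2 * (ρ / 4 + α / 2) * Real.sqrt (2 * ρ / (4 * α)) := by
    apply mul_le_mul (by nlinarith) hsq (Real.sqrt_nonneg _) (by positivity)
  have he1 : Real.exp (-(lam * ρ / 4 + α / 2) * |x|) ≤ Real.exp (-(α / 2) * |x|) :=
    Real.exp_le_exp.2 (by nlinarith [abs_nonneg x, mul_nonneg (mul_pos hl hρ).le (abs_nonneg x)])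
  have hden1 : (1:ℝ) ≤ 1 + lam * ρ / (lam * ρ + 4 * α) *
      Real.exp (-(lam * ρ / 4 + α / 2) * |x|) ^ 2 :=
    le_add_of_nonneg_right (by positivity)
  constructor
  · unfold Pf; positivity
  · unfold Pf
    calc 2 * (lam * ρ / 4 + α / 2) * Real.sqrt (2 * ρ / (lam * ρ + 4 * α)) *
          Real.exp (-(lam * ρ / 4 + α / 2) * |x|) /
        (1 + lam * ρ / (lam * ρ + 4 * α) * Real.exp (-(lam * ρ / 4 + α / 2) * |x|) ^ 2)
        ≤ 2 * (lam * ρ / 4 + α / 2) * Real.sqrt (2 * ρ / (lam * ρ + 4 * α)) *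
          Real.exp (-(lam * ρ / 4 + α / 2) * |x|) := div_le_self (by positivity) hden1
      _ ≤ 2 * (ρ / 4 + α / 2) * Real.sqrt (2 * ρ / (4 * α)) * Real.exp (-(α / 2) * |x|) :=
        mul_le_mul hAle he1 (Real.exp_pos _).le (by positivity)

lemma Qf_bound (α ρ lam x : ℝ) (hα : 0 < α) (hρ : 0 < ρ) (hl : 0 < lam) (hl1 : lam ≤ 1) :
    |Qf α ρ lam x| ≤
      2 * (ρ / 4 + α / 2) * Real.sqrt (2 * ρ / (4 * α)) * (ρ / 4 + α / 2) *
        Real.exp (-(α / 2) * |x|) := by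
  have hb0 : (0:ℝ) < lam * ρ / 4 + α / 2 := by positivity
  have hD : (0:ℝ) < lam * ρ + 4 * α := by positivity
  have ht0 : (0:ℝ) ≤ lam * ρ / (lam * ρ + 4 * α) := by positivity
  have ht1 : lam * ρ / (lam * ρ + 4 * α) ≤ 1 := by
    rw [div_le_one hD]; nlinarith
  have he0 : (0:ℝ) < Real.exp (-(lam * ρ / 4 + α / 2) * |x|) := Real.exp_pos _
  have heone : Real.exp (-(lam * ρ / 4 + α / 2) * |x|) ≤ 1 :=
    Real.exp_le_one_iff.2 (by nlinarith [abs_nonneg x])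
  have hte : lam * ρ / (lam * ρ + 4 * α) * Real.exp (-(lam * ρ / 4 + α / 2) * |x|) ^ 2 ≤ 1 := by
    nlinarith
  have hsq : Real.sqrt (2 * ρ / (lam * ρ + 4 * α)) ≤ Real.sqrt (2 * ρ / (4 * α)) := by
    apply Real.sqrt_le_sqrt
    apply div_le_div_of_nonneg_left (by positivity) (by positivity)
    nlinarith
  have hAle : 2 * (lam * ρ / 4 + α / 2) * Real.sqrt (2 * ρ / (lam * ρ + 4 * α))
      ≤ 2 * (ρ / 4 + α / 2) * Real.sqrt (2 * ρ / (4 * α)) :=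
    mul_le_mul (by nlinarith) hsq (Real.sqrt_nonneg _) (by positivity)
  have he1 : Real.exp (-(lam * ρ / 4 + α / 2) * |x|) ≤ Real.exp (-(α / 2) * |x|) :=
    Real.exp_le_exp.2 (by nlinarith [abs_nonneg x, mul_nonneg (mul_pos hl hρ).le (abs_nonneg x)])
  have hden1 : (1:ℝ) ≤ 1 + lam * ρ / (lam * ρ + 4 * α) *
      Real.exp (-(lam * ρ / 4 + α / 2) * |x|) ^ 2 :=
    le_add_of_nonneg_right (by positivity)
  have hsabs : |(if 0 < x then (1:ℝ) else -1)| = 1 := by split <;> simp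
  have h1me : (0:ℝ) ≤ 1 - lam * ρ / (lam * ρ + 4 * α) *
      Real.exp (-(lam * ρ / 4 + α / 2) * |x|) ^ 2 := by linarith
  have hA0 : (0:ℝ) ≤ 2 * (lam * ρ / 4 + α / 2) * Real.sqrt (2 * ρ / (lam * ρ + 4 * α)) := by
    positivity
  have hAbb0 : (0:ℝ) ≤ 2 * (lam * ρ / 4 + α / 2) * Real.sqrt (2 * ρ / (lam * ρ + 4 * α)) *
      (lam * ρ / 4 + α / 2) := by positivity
  have hbble : lam * ρ / 4 + α / 2 ≤ ρ / 4 + α / 2 := by nlinarith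
  set A := 2 * (lam * ρ / 4 + α / 2) * Real.sqrt (2 * ρ / (lam * ρ + 4 * α)) with hA
  set bb := lam * ρ / 4 + α / 2 with hbb
  set e := Real.exp (-(lam * ρ / 4 + α / 2) * |x|) with he
  set tt := lam * ρ / (lam * ρ + 4 * α) with htt
  set den := 1 + tt * e ^ 2 with hden
  have habs : |Qf α ρ lam x| = A * bb * |(if 0 < x then (1:ℝ) else -1)| * e * (1 - tt * e ^ 2)
      / den ^ 2 := by
    unfold Qf
    rw [abs_div, abs_of_pos (by positivity : (0:ℝ) < den ^ 2)]
    congr 1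
    rw [abs_mul, abs_mul, abs_mul, abs_neg, abs_of_nonneg hAbb0,
      abs_of_pos he0, abs_of_nonneg h1me]
  rw [habs, hsabs, mul_one]
  calc A * bb * e * (1 - tt * e ^ 2) / den ^ 2
      ≤ A * bb * e * (1 - tt * e ^ 2) :=
        div_le_self (mul_nonneg (mul_nonneg hAbb0 he0.le) h1me) (by nlinarith)
    _ ≤ A * bb * e := mul_le_of_le_one_right (mul_nonneg hAbb0 he0.le) (by nlinarith)
    _ ≤ 2 * (ρ / 4 + α / 2) * Real.sqrt (2 * ρ / (4 * α)) * (ρ / 4 + α / 2) *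
        Real.exp (-(α / 2) * |x|) := by
      apply mul_le_mul _ he1 he0.le (by positivity)
      exact mul_le_mul hAle hbble hb0.le (by positivity)

lemma Gd_abs (α ρ x : ℝ) (hα : 0 < α) (hρ : 0 < ρ) :
    |Gd α ρ x| = Real.sqrt (ρ * α / 2) * (α / 2) * Real.exp (-(α / 2) * |x|) := by
  have hsabs : |(if 0 < x then (1:ℝ) else -1)| = 1 := by split <;> simp
  unfold Gd
  rw [abs_mul, abs_mul, abs_neg, hsabs, mul_one,
    abs_of_nonneg (by positivity : (0:ℝ) ≤ Real.sqrt (ρ * α / 2) * (α / 2)),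
    abs_of_pos (Real.exp_pos _)]

lemma tendsto_coeffs (α ρ : ℝ) (hα : 0 < α) (hρ : 0 < ρ) :
    Tendsto (fun lam : ℝ => lam * ρ / 4 + α / 2) (𝓝[>] 0) (𝓝 (α / 2)) ∧
    Tendsto (fun lam : ℝ => lam * ρ / (lam * ρ + 4 * α)) (𝓝[>] 0) (𝓝 0) ∧
    Tendsto (fun lam : ℝ => 2 * (lam * ρ / 4 + α / 2) * Real.sqrt (2 * ρ / (lam * ρ + 4 * α)))
      (𝓝[>] 0) (𝓝 (Real.sqrt (ρ * α / 2))) := by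
  refine ⟨?_, ?_, ?_⟩
  · have h : Tendsto (fun lam : ℝ => lam * ρ / 4 + α / 2) (𝓝 0) (𝓝 (0 * ρ / 4 + α / 2)) :=
      Continuous.tendsto (by continuity) 0
    simpa using h.mono_left nhdsWithin_le_nhds
  · have h : Tendsto (fun lam : ℝ => lam * ρ / (lam * ρ + 4 * α)) (𝓝 0)
        (𝓝 (0 * ρ / (0 * ρ + 4 * α))) := by
      apply Tendsto.div (Continuous.tendsto (by continuity) 0)
        (Continuous.tendsto (by continuity) 0)
      positivity
    have h2 : 0 * ρ / (0 * ρ + 4 * α) = 0 := by simp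
    rw [h2] at h
    exact h.mono_left nhdsWithin_le_nhds
  · have h : Tendsto (fun lam : ℝ => 2 * (lam * ρ / 4 + α / 2) *
        Real.sqrt (2 * ρ / (lam * ρ + 4 * α))) (𝓝 0)
        (𝓝 (2 * (0 * ρ / 4 + α / 2) * Real.sqrt (2 * ρ / (0 * ρ + 4 * α)))) := by
      apply Tendsto.mul (Continuous.tendsto (by continuity) 0)
      exact (Real.continuous_sqrt.tendsto _).comp
        (Tendsto.div (Continuous.tendsto (by continuity) 0)
          (Continuous.tendsto (by continuity) 0) (by positivity))
    have h2 : 2 * (0 * ρ / 4 + α / 2) * Real.sqrt (2 * ρ / (0 * ρ + 4 * α))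
        = Real.sqrt (ρ * α / 2) := by
      have h3 : (ρ * α / 2) = α ^ 2 * (2 * ρ / (0 * ρ + 4 * α)) := by
        field_simp; ring
      rw [h3, Real.sqrt_mul (by positivity), Real.sqrt_sq hα.le]; ring
    rw [h2] at h
    exact h.mono_left nhdsWithin_le_nhds

lemma tendsto_Pf (α ρ x : ℝ) (hα : 0 < α) (hρ : 0 < ρ) :
    Tendsto (fun lam : ℝ => Pf α ρ lam x) (𝓝[>] 0)
      (𝓝 (Real.sqrt (ρ * α / 2) * Real.exp (-(α / 2) * |x|))) := by
  obtain ⟨hb, ht, hA⟩ := tendsto_coeffs α ρ hα hρ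
  have hexp : Tendsto (fun lam : ℝ => Real.exp (-(lam * ρ / 4 + α / 2) * |x|)) (𝓝[>] 0)
      (𝓝 (Real.exp (-(α / 2) * |x|))) :=
    (Real.continuous_exp.tendsto _).comp (hb.neg.mul_const |x|)
  have hnum := hA.mul hexp
  have hden : Tendsto (fun lam : ℝ => 1 + lam * ρ / (lam * ρ + 4 * α) *
      Real.exp (-(lam * ρ / 4 + α / 2) * |x|) ^ 2) (𝓝[>] 0)
      (𝓝 (1 + 0 * Real.exp (-(α / 2) * |x|) ^ 2)) :=
    tendsto_const_nhds.add (ht.mul (hexp.pow 2))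
  have h := hnum.div hden (by norm_num)
  simpa [Pf, Pi.div_def] using h

lemma tendsto_Qf (α ρ x : ℝ) (hα : 0 < α) (hρ : 0 < ρ) :
    Tendsto (fun lam : ℝ => Qf α ρ lam x) (𝓝[>] 0) (𝓝 (Gd α ρ x)) := by
  obtain ⟨hb, ht, hA⟩ := tendsto_coeffs α ρ hα hρ
  have hexp : Tendsto (fun lam : ℝ => Real.exp (-(lam * ρ / 4 + α / 2) * |x|)) (𝓝[>] 0)
      (𝓝 (Real.exp (-(α / 2) * |x|))) :=
    (Real.continuous_exp.tendsto _).comp (hb.neg.mul_const |x|)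
  have hone : Tendsto (fun _ : ℝ => (1:ℝ)) (𝓝[>] 0) (𝓝 1) := tendsto_const_nhds
  have hnum := (((hA.mul hb).neg.mul_const (if 0 < x then (1:ℝ) else -1)).mul hexp).mul
    (hone.sub (ht.mul (hexp.pow 2)))
  have hden : Tendsto (fun lam : ℝ => (1 + lam * ρ / (lam * ρ + 4 * α) *
      Real.exp (-(lam * ρ / 4 + α / 2) * |x|) ^ 2) ^ 2) (𝓝[>] 0)
      (𝓝 ((1 + 0 * Real.exp (-(α / 2) * |x|) ^ 2) ^ 2)) :=
    (tendsto_const_nhds.add (ht.mul (hexp.pow 2))).pow 2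
  have h := hnum.div hden (by norm_num)
  have hval : -(Real.sqrt (ρ * α / 2) * (α / 2)) * (if 0 < x then (1:ℝ) else -1) *
      Real.exp (-(α / 2) * |x|) * (1 - 0 * Real.exp (-(α / 2) * |x|) ^ 2) /
      (1 + 0 * Real.exp (-(α / 2) * |x|) ^ 2) ^ 2 = Gd α ρ x := by
    simp [Gd]
  rw [hval] at h
  simpa [Qf, Pi.div_def] using h


/-- Linear limit λ → 0+ at fixed mass ρ of the ground state of the cubic NLS with an
attractive Dirac delta potential: φ_λ → √(ρα/2) e^{-(α/2)|x|} in H¹(ℝ). -/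
theorem statement2 (α ρ : ℝ) (hα : 0 < α) (hρ : 0 < ρ)
    (φ : ℝ → ℝ → ℝ)
    (hφ : ∀ lam x, φ lam x =
      Real.sqrt (2 * (lam * ρ / 4 + α / 2) ^ 2 / lam) *
        sech ((lam * ρ / 4 + α / 2) *
          (|x| - (2 / (lam * ρ + 2 * α)) * Real.log (lam * ρ / (lam * ρ + 4 * α)))))
    (g : ℝ → ℝ)
    (hg : ∀ x, g x = Real.sqrt (ρ * α / 2) * Real.exp (-(α / 2) * |x|)) :
    Tendsto (fun lam : ℝ =>
        (∫ x : ℝ, (φ lam x - g x) ^ 2)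
          + ∫ x in ({(0:ℝ)}ᶜ : Set ℝ), (deriv (φ lam) x - deriv g x) ^ 2)
      (𝓝[>] 0) (𝓝 0) := by
  have hgfun : g = fun y => Real.sqrt (ρ * α / 2) * Real.exp (-(α / 2) * |y|) := funext hg
  have hφfun : ∀ lam : ℝ, 0 < lam → φ lam = Pf α ρ lam := fun lam hl => funext fun x => by
    rw [hφ]; exact phi_form α ρ lam x hα hρ hl
  have hderivg : ∀ x : ℝ, x ≠ 0 → deriv g x = Gd α ρ x := by
    intro x hx
    have hfun2 : g = fun y => Real.sqrt (ρ * α / 2) * Real.exp (-(α / 2) * |y|) /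
        (1 + 0 * Real.exp (-(α / 2) * |y|) ^ 2) := by
      funext y; rw [hg]; simp
    rw [hfun2, (hasDerivAt_aux (Real.sqrt (ρ * α / 2)) (α / 2) 0 x le_rfl hx).deriv]
    simp [Gd]
  have hderivφ : ∀ lam : ℝ, 0 < lam → ∀ x : ℝ, x ≠ 0 → deriv (φ lam) x = Qf α ρ lam x := by
    intro lam hl x hx
    rw [hφfun lam hl]
    exact (hasDerivAt_Pf α ρ lam x hα hρ hl hx).deriv
  have hmeas1 : ∀ lam : ℝ, AEStronglyMeasurable (fun x : ℝ => (Pf α ρ lam x - g x) ^ 2) volume := by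
    intro lam
    apply Measurable.aestronglyMeasurable
    have h1 : Measurable (Pf α ρ lam) := by unfold Pf; fun_prop
    have h2 : Measurable g := by rw [hgfun]; fun_prop
    exact (h1.sub h2).pow_const 2
  have hmeas2 : ∀ lam : ℝ, AEStronglyMeasurable (fun x : ℝ => (Qf α ρ lam x - Gd α ρ x) ^ 2)
      (volume.restrict ({(0:ℝ)}ᶜ : Set ℝ)) := by
    intro lam
    apply Measurable.aestronglyMeasurable
    have hite : Measurable fun x : ℝ => (if 0 < x then (1:ℝ) else -1) :=
      Measurable.ite (measurableSet_lt measurable_const measurable_id)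
        measurable_const measurable_const
    have h1 : Measurable (Qf α ρ lam) := by unfold Qf; fun_prop
    have h2 : Measurable (Gd α ρ) := by unfold Gd; fun_prop
    exact (h1.sub h2).pow_const 2
  have hEsq : ∀ x : ℝ, Real.exp (-(α / 2) * |x|) ^ 2 = Real.exp (-α * |x|) := fun x => by
    rw [sq, ← Real.exp_add]; congr 1; ring
  have hG0 : 0 ≤ Real.sqrt (ρ * α / 2) := Real.sqrt_nonneg _
  have hCA0 : 0 ≤ 2 * (ρ / 4 + α / 2) * Real.sqrt (2 * ρ / (4 * α)) := by positivity
  have hCB0 : 0 ≤ ρ / 4 + α / 2 := by positivity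
  -- first integral
  have hbd1 : ∀ᶠ lam in 𝓝[>] (0:ℝ), ∀ᵐ x : ℝ,
      ‖(Pf α ρ lam x - g x) ^ 2‖ ≤
        (2 * (ρ / 4 + α / 2) * Real.sqrt (2 * ρ / (4 * α)) + Real.sqrt (ρ * α / 2)) ^ 2 *
          Real.exp (-α * |x|) := by
    filter_upwards [Ioc_mem_nhdsGT (zero_lt_one : (0:ℝ) < 1)] with lam hlam
    apply ae_of_all; intro x
    obtain ⟨hP0, hPle⟩ := Pf_bounds α ρ lam x hα hρ hlam.1 hlam.2
    have hE0 : 0 < Real.exp (-(α / 2) * |x|) := Real.exp_pos _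
    have hgx : g x = Real.sqrt (ρ * α / 2) * Real.exp (-(α / 2) * |x|) := hg x
    have habs : |Pf α ρ lam x - g x| ≤
        (2 * (ρ / 4 + α / 2) * Real.sqrt (2 * ρ / (4 * α)) + Real.sqrt (ρ * α / 2)) *
          Real.exp (-(α / 2) * |x|) := by
      rw [hgx]
      apply abs_le.2
      constructor
      · nlinarith [mul_nonneg hCA0 hE0.le, mul_nonneg hG0 hE0.le]
      · nlinarith [mul_nonneg hCA0 hE0.le, mul_nonneg hG0 hE0.le]
    rw [Real.norm_eq_abs, abs_of_nonneg (sq_nonneg _)]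
    calc (Pf α ρ lam x - g x) ^ 2 = |Pf α ρ lam x - g x| ^ 2 := (sq_abs _).symm
      _ ≤ ((2 * (ρ / 4 + α / 2) * Real.sqrt (2 * ρ / (4 * α)) + Real.sqrt (ρ * α / 2)) *
          Real.exp (-(α / 2) * |x|)) ^ 2 :=
        pow_le_pow_left₀ (abs_nonneg _) habs 2
      _ = (2 * (ρ / 4 + α / 2) * Real.sqrt (2 * ρ / (4 * α)) + Real.sqrt (ρ * α / 2)) ^ 2 *
          Real.exp (-α * |x|) := by rw [mul_pow, hEsq x]
  have hint1 : Integrable (fun x : ℝ =>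
      (2 * (ρ / 4 + α / 2) * Real.sqrt (2 * ρ / (4 * α)) + Real.sqrt (ρ * α / 2)) ^ 2 *
        Real.exp (-α * |x|)) :=
    (integrable_exp_neg_abs hα).const_mul _
  have hlim1 : ∀ᵐ x : ℝ, Tendsto (fun lam : ℝ => (Pf α ρ lam x - g x) ^ 2)
      (𝓝[>] 0) (𝓝 ((fun _ : ℝ => (0:ℝ)) x)) := by
    apply ae_of_all; intro x
    have h := ((tendsto_Pf α ρ x hα hρ).sub (tendsto_const_nhds (x := g x))).pow 2
    have hz : (Real.sqrt (ρ * α / 2) * Real.exp (-(α / 2) * |x|) - g x) ^ 2 = 0 := by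
      rw [hg x]; ring
    rw [hz] at h
    exact h
  have T1 := tendsto_integral_filter_of_dominated_convergence
    (μ := (volume : Measure ℝ)) (F := fun lam x => (Pf α ρ lam x - g x) ^ 2)
    (f := fun _ : ℝ => (0:ℝ)) _ (Eventually.of_forall hmeas1) hbd1 hint1 hlim1
  rw [integral_zero] at T1
  -- second integral
  have hbd2 : ∀ᶠ lam in 𝓝[>] (0:ℝ), ∀ᵐ x : ℝ ∂(volume.restrict ({(0:ℝ)}ᶜ : Set ℝ)),
      ‖(Qf α ρ lam x - Gd α ρ x) ^ 2‖ ≤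
        (2 * (ρ / 4 + α / 2) * Real.sqrt (2 * ρ / (4 * α)) * (ρ / 4 + α / 2) +
          Real.sqrt (ρ * α / 2) * (α / 2)) ^ 2 * Real.exp (-α * |x|) := by
    filter_upwards [Ioc_mem_nhdsGT (zero_lt_one : (0:ℝ) < 1)] with lam hlam
    apply ae_of_all; intro x
    have hQ := Qf_bound α ρ lam x hα hρ hlam.1 hlam.2
    have hGd := Gd_abs α ρ x hα hρ
    have hE0 : 0 < Real.exp (-(α / 2) * |x|) := Real.exp_pos _
    have habs : |Qf α ρ lam x - Gd α ρ x| ≤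
        (2 * (ρ / 4 + α / 2) * Real.sqrt (2 * ρ / (4 * α)) * (ρ / 4 + α / 2) +
          Real.sqrt (ρ * α / 2) * (α / 2)) * Real.exp (-(α / 2) * |x|) := by
      calc |Qf α ρ lam x - Gd α ρ x| = |Qf α ρ lam x + -(Gd α ρ x)| := by rw [sub_eq_add_neg]
        _ ≤ |Qf α ρ lam x| + |-(Gd α ρ x)| := abs_add_le _ _
        _ = |Qf α ρ lam x| + |Gd α ρ x| := by rw [abs_neg]
        _ ≤ (2 * (ρ / 4 + α / 2) * Real.sqrt (2 * ρ / (4 * α)) * (ρ / 4 + α / 2) +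
            Real.sqrt (ρ * α / 2) * (α / 2)) * Real.exp (-(α / 2) * |x|) := by
          rw [hGd]; nlinarith [hQ]
    rw [Real.norm_eq_abs, abs_of_nonneg (sq_nonneg _)]
    calc (Qf α ρ lam x - Gd α ρ x) ^ 2 = |Qf α ρ lam x - Gd α ρ x| ^ 2 := (sq_abs _).symm
      _ ≤ ((2 * (ρ / 4 + α / 2) * Real.sqrt (2 * ρ / (4 * α)) * (ρ / 4 + α / 2) +
          Real.sqrt (ρ * α / 2) * (α / 2)) * Real.exp (-(α / 2) * |x|)) ^ 2 :=
        pow_le_pow_left₀ (abs_nonneg _) habs 2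
      _ = (2 * (ρ / 4 + α / 2) * Real.sqrt (2 * ρ / (4 * α)) * (ρ / 4 + α / 2) +
          Real.sqrt (ρ * α / 2) * (α / 2)) ^ 2 * Real.exp (-α * |x|) := by rw [mul_pow, hEsq x]
  have hint2 : Integrable (fun x : ℝ =>
      (2 * (ρ / 4 + α / 2) * Real.sqrt (2 * ρ / (4 * α)) * (ρ / 4 + α / 2) +
        Real.sqrt (ρ * α / 2) * (α / 2)) ^ 2 * Real.exp (-α * |x|))
      (volume.restrict ({(0:ℝ)}ᶜ : Set ℝ)) :=
    ((integrable_exp_neg_abs hα).const_mul _).restrict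
  have hlim2 : ∀ᵐ x : ℝ ∂(volume.restrict ({(0:ℝ)}ᶜ : Set ℝ)),
      Tendsto (fun lam : ℝ => (Qf α ρ lam x - Gd α ρ x) ^ 2)
      (𝓝[>] 0) (𝓝 ((fun _ : ℝ => (0:ℝ)) x)) := by
    apply ae_of_all; intro x
    have h := ((tendsto_Qf α ρ x hα hρ).sub (tendsto_const_nhds (x := Gd α ρ x))).pow 2
    have hz : (Gd α ρ x - Gd α ρ x) ^ 2 = 0 := by ring
    rw [hz] at h
    exact h
  have T2 := tendsto_integral_filter_of_dominated_convergence
    (μ := (volume.restrict ({(0:ℝ)}ᶜ : Set ℝ)))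
    (F := fun lam x => (Qf α ρ lam x - Gd α ρ x) ^ 2)
    (f := fun _ : ℝ => (0:ℝ)) _ (Eventually.of_forall hmeas2) hbd2 hint2 hlim2
  rw [integral_zero] at T2
  have Tsum := T1.add T2
  rw [add_zero] at Tsum
  refine Tendsto.congr' ?_ Tsum
  filter_upwards [self_mem_nhdsWithin] with lam hl
  have hl' : (0:ℝ) < lam := hl
  have e1 : (∫ x : ℝ, (Pf α ρ lam x - g x) ^ 2) = ∫ x : ℝ, (φ lam x - g x) ^ 2 := by
    rw [hφfun lam hl']
  have e2 : (∫ x in ({(0:ℝ)}ᶜ : Set ℝ), (Qf α ρ lam x - Gd α ρ x) ^ 2)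
      = ∫ x in ({(0:ℝ)}ᶜ : Set ℝ), (deriv (φ lam) x - deriv g x) ^ 2 := by
    apply integral_congr_ae
    filter_upwards [ae_restrict_mem (measurableSet_singleton (0:ℝ)).compl] with x hx
    rw [hderivφ lam hl' x hx, hderivg x hx]
  rw [e1, e2]

end
end

section
/- Let γ > 0 and ω > 0. The system t₁² − t₁⁴ = t₂² − t₂⁴, 1/t₁ − 1/t₂ = γ√ω has exactly one solution (t₁, t₂) with 0 < t₁ ≤ 1 and 0 < t₂ ≤ 1, namely t₁ = (1 − √(1 + γ²ω) + √(γ²ω − 2 + 2√(1 + γ²ω)))/(2γ√ω) and t₂ = (−1 + √(1 + γ²ω) + √(γ²ω − 2 + 2√(1 + γ²ω)))/(2γ√ω); moreover this solution satisfies 0 < t₁ < t₂ < 1 and t₁² + t₂² = 1. -/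
open Real

noncomputable section

/-- The system T₊ : t₁² − t₁⁴ = t₂² − t₂⁴, 1/t₁ − 1/t₂ = γ√ω has a unique solution with
0 < t₁ ≤ 1, 0 < t₂ ≤ 1, given explicitly, and it satisfies 0 < t₁ < t₂ < 1 and t₁² + t₂² = 1. -/
theorem statement4 (γ ω : ℝ) (hγ : 0 < γ) (hω : 0 < ω)
    (s₁ s₂ : ℝ)
    (hs₁ : s₁ = (1 - Real.sqrt (1 + γ ^ 2 * ω)
        + Real.sqrt (γ ^ 2 * ω - 2 + 2 * Real.sqrt (1 + γ ^ 2 * ω)))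
      / (2 * γ * Real.sqrt ω))
    (hs₂ : s₂ = (-1 + Real.sqrt (1 + γ ^ 2 * ω)
        + Real.sqrt (γ ^ 2 * ω - 2 + 2 * Real.sqrt (1 + γ ^ 2 * ω)))
      / (2 * γ * Real.sqrt ω)) :
    (∀ t₁ t₂ : ℝ,
      (0 < t₁ ∧ t₁ ≤ 1 ∧ 0 < t₂ ∧ t₂ ≤ 1 ∧
        t₁ ^ 2 - t₁ ^ 4 = t₂ ^ 2 - t₂ ^ 4 ∧ 1 / t₁ - 1 / t₂ = γ * Real.sqrt ω)
      ↔ (t₁ = s₁ ∧ t₂ = s₂)) ∧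
    0 < s₁ ∧ s₁ < s₂ ∧ s₂ < 1 ∧ s₁ ^ 2 + s₂ ^ 2 = 1 := by
  set g := γ * Real.sqrt ω with hg
  clear_value g
  have hg0 : 0 < g := by rw [hg]; positivity
  have hgsq : g ^ 2 = γ ^ 2 * ω := by
    rw [hg, mul_pow, Real.sq_sqrt hω.le]
  set a := Real.sqrt (1 + g ^ 2) with ha
  clear_value a
  have ha2 : a ^ 2 = 1 + g ^ 2 := by rw [ha]; exact Real.sq_sqrt (by positivity)
  have ha1 : 1 < a := by
    have h1 : (1:ℝ) = Real.sqrt 1 := Real.sqrt_one.symm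
    rw [ha]
    nth_rewrite 1 [h1]
    exact Real.sqrt_lt_sqrt (by norm_num) (by nlinarith)
  set b := Real.sqrt (g ^ 2 - 2 + 2 * a) with hb
  clear_value b
  have hbarg : 0 < g ^ 2 - 2 + 2 * a := by nlinarith
  have hb2 : b ^ 2 = g ^ 2 - 2 + 2 * a := by rw [hb]; exact Real.sq_sqrt hbarg.le
  have hb0 : 0 < b := by rw [hb]; exact Real.sqrt_pos.mpr hbarg
  have hden : (2:ℝ) * γ * Real.sqrt ω = 2 * g := by rw [hg]; ring
  have hs₁' : s₁ = (1 - a + b) / (2 * g) := by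
    rw [hs₁, hden, ← hgsq, ← ha, ← hb]
  have hs₂' : s₂ = (-1 + a + b) / (2 * g) := by
    rw [hs₂, hden, ← hgsq, ← ha, ← hb]
  have hbgt : a - 1 < b := by nlinarith
  have hs₁g : s₁ * (2 * g) = 1 - a + b := by
    rw [hs₁']; field_simp
  have hs₂g : s₂ * (2 * g) = -1 + a + b := by
    rw [hs₂']; field_simp
  have hs₁0 : 0 < s₁ := by
    rw [hs₁']; exact div_pos (by linarith) (by positivity)
  have hdiffg : (s₂ - s₁) * g = a - 1 := by
    linear_combination (1/2) * hs₂g - (1/2) * hs₁g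
  have hsumg : (s₁ + s₂) * g = b := by
    linear_combination (1/2) * hs₁g + (1/2) * hs₂g
  have hprodg : s₁ * s₂ * g ^ 2 = a - 1 := by
    linear_combination (s₂ * g / 2) * hs₁g + ((1 - a + b) / 4) * hs₂g
      + (1/4) * hb2 - (1/4) * ha2
  have hlt : s₁ < s₂ := by nlinarith
  have hs₂0 : 0 < s₂ := lt_trans hs₁0 hlt
  have hsqg : (s₁ ^ 2 + s₂ ^ 2) * g ^ 2 = 1 * g ^ 2 := by
    linear_combination ((s₁ + s₂) * g + b) * hsumg - 2 * hprodg + hb2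
  have hsq : s₁ ^ 2 + s₂ ^ 2 = 1 :=
    mul_right_cancel₀ (pow_ne_zero 2 hg0.ne') hsqg
  have hs₂1 : s₂ < 1 := by nlinarith [mul_pos hs₁0 hs₁0]
  have hkey : s₂ - s₁ = g * (s₁ * s₂) := by
    have h2 : (s₂ - s₁) * g = (g * (s₁ * s₂)) * g := by
      linear_combination hdiffg - hprodg
    exact mul_right_cancel₀ hg0.ne' h2
  have hinv : 1 / s₁ - 1 / s₂ = g := by
    rw [div_sub_div _ _ hs₁0.ne' hs₂0.ne',
      div_eq_iff (mul_ne_zero hs₁0.ne' hs₂0.ne')]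
    linear_combination hkey
  refine ⟨fun t₁ t₂ => ⟨?_, ?_⟩, hs₁0, hlt, hs₂1, hsq⟩
  · rintro ⟨ht₁0, ht₁1, ht₂0, ht₂1, heq1, heq2⟩
    have htlt : t₁ < t₂ := by
      by_contra h
      push_neg at h
      have := one_div_le_one_div_of_le ht₂0 h
      linarith
    have hne : t₁ ^ 2 < t₂ ^ 2 := by
      exact pow_lt_pow_left₀ htlt ht₁0.le two_ne_zero
    have hfac0 : (t₁ ^ 2 - t₂ ^ 2) * (1 - t₁ ^ 2 - t₂ ^ 2) = 0 := by
      linear_combination heq1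
    have hsum1 : t₁ ^ 2 + t₂ ^ 2 = 1 := by
      rcases mul_eq_zero.mp hfac0 with h | h
      · exfalso; linarith
      · linarith
    have heq2' : t₂ - t₁ = g * (t₁ * t₂) := by
      rw [div_sub_div _ _ ht₁0.ne' ht₂0.ne',
        div_eq_iff (mul_ne_zero ht₁0.ne' ht₂0.ne')] at heq2
      linear_combination heq2
    have hquad : g ^ 2 * (t₁ * t₂) ^ 2 + 2 * (t₁ * t₂) - 1 = 0 := by
      linear_combination (-(g * (t₁ * t₂)) - (t₂ - t₁)) * heq2' + hsum1
    have hfac : (g ^ 2 * (t₁ * t₂) - (a - 1)) * (g ^ 2 * (t₁ * t₂) + (a + 1)) = 0 := by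
      linear_combination g ^ 2 * hquad - ha2
    have hp : g ^ 2 * (t₁ * t₂) = a - 1 := by
      rcases mul_eq_zero.mp hfac with h | h
      · linarith
      · exfalso
        have h1 := mul_pos (pow_pos hg0 2) (mul_pos ht₁0 ht₂0)
        linarith
    have hdiff2 : (t₂ - t₁) * g = a - 1 := by
      linear_combination g * heq2' + hp
    have hdiff' : t₂ - t₁ = (a - 1) / g := by
      rw [eq_div_iff hg0.ne']; exact hdiff2
    have hsum2 : (t₁ + t₂) ^ 2 * g ^ 2 = b ^ 2 := by
      linear_combination g ^ 2 * hsum1 + 2 * hp - hb2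
    have hsum3 : t₁ + t₂ = b / g := by
      have h1 : 0 < t₁ + t₂ := by linarith
      have h2 : (t₁ + t₂) ^ 2 = (b / g) ^ 2 := by
        rw [div_pow, eq_div_iff (by positivity : g ^ 2 ≠ 0)]
        linear_combination hsum2
      calc t₁ + t₂ = Real.sqrt ((t₁ + t₂) ^ 2) := (Real.sqrt_sq h1.le).symm
        _ = Real.sqrt ((b / g) ^ 2) := by rw [h2]
        _ = b / g := Real.sqrt_sq (by positivity)
    constructor
    · rw [hs₁']
      have ht : t₁ = (b / g - (a - 1) / g) / 2 := by linarith
      rw [ht]; field_simp; ring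
    · rw [hs₂']
      have ht : t₂ = (b / g + (a - 1) / g) / 2 := by linarith
      rw [ht]; field_simp; ring
  · rintro ⟨h1, h2⟩
    rw [h1, h2]
    exact ⟨hs₁0, le_of_lt (lt_trans hlt hs₂1), hs₂0, hs₂1.le,
      by linear_combination (s₂ ^ 2 - s₁ ^ 2) * hsq, hinv⟩

end
end

section
/- Let γ > 0 and ω > 0, and consider the system t₁² − t₁⁴ = t₂² − t₂⁴, 1/t₁ + 1/t₂ = γ√ω in the unknowns (t₁, t₂) with 0 < t₁ < 1 and 0 < t₂ < 1. Then: (1) if ω ≤ 4/γ² the system has no solution; (2) if ω > 4/γ² then t₁ = t₂ = 2/(γ√ω) is a solution, and if moreover ω ≤ 8/γ² it is the only solution. -/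
open Real

noncomputable section

/-- The system T₋ : t₁² − t₁⁴ = t₂² − t₂⁴, 1/t₁ + 1/t₂ = γ√ω with 0 < t₁ < 1, 0 < t₂ < 1:
(1) if ω ≤ 4/γ² there is no solution; (2) if ω > 4/γ² then t₁ = t₂ = 2/(γ√ω) is a solution,
and it is the only one when moreover ω ≤ 8/γ². -/
theorem statement5 (γ ω : ℝ) (hγ : 0 < γ) (hω : 0 < ω) :
    (ω ≤ 4 / γ ^ 2 →
      ¬ ∃ t₁ t₂ : ℝ, 0 < t₁ ∧ t₁ < 1 ∧ 0 < t₂ ∧ t₂ < 1 ∧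
        t₁ ^ 2 - t₁ ^ 4 = t₂ ^ 2 - t₂ ^ 4 ∧ 1 / t₁ + 1 / t₂ = γ * Real.sqrt ω) ∧
    (4 / γ ^ 2 < ω →
      (0 < 2 / (γ * Real.sqrt ω) ∧ 2 / (γ * Real.sqrt ω) < 1 ∧
        (2 / (γ * Real.sqrt ω)) ^ 2 - (2 / (γ * Real.sqrt ω)) ^ 4
          = (2 / (γ * Real.sqrt ω)) ^ 2 - (2 / (γ * Real.sqrt ω)) ^ 4 ∧
        1 / (2 / (γ * Real.sqrt ω)) + 1 / (2 / (γ * Real.sqrt ω)) = γ * Real.sqrt ω) ∧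
      (ω ≤ 8 / γ ^ 2 →
        ∀ t₁ t₂ : ℝ, 0 < t₁ → t₁ < 1 → 0 < t₂ → t₂ < 1 →
          t₁ ^ 2 - t₁ ^ 4 = t₂ ^ 2 - t₂ ^ 4 → 1 / t₁ + 1 / t₂ = γ * Real.sqrt ω →
          t₁ = 2 / (γ * Real.sqrt ω) ∧ t₂ = 2 / (γ * Real.sqrt ω))) := by
  set s := γ * Real.sqrt ω with hsdef
  have hsq : Real.sqrt ω > 0 := Real.sqrt_pos.mpr hω
  have hs : 0 < s := mul_pos hγ hsq
  have hs2 : s ^ 2 = γ ^ 2 * ω := by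
    rw [hsdef, mul_pow, Real.sq_sqrt hω.le]
  constructor
  · intro h ⟨t₁, t₂, h1, h2, h3, h4, _, heq⟩
    -- s ≤ 2
    have hγω : γ ^ 2 * ω ≤ 4 := by
      rw [le_div_iff₀ (by positivity)] at h; linarith [h]
    have hsle : s ≤ 2 := by nlinarith
    have i1 : 1 < 1 / t₁ := by rw [lt_div_iff₀ h1]; linarith
    have i2 : 1 < 1 / t₂ := by rw [lt_div_iff₀ h3]; linarith
    linarith
  · intro h
    have hγω : 4 < γ ^ 2 * ω := by
      rw [div_lt_iff₀ (by positivity)] at h; linarith [h]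
    have hsgt : 2 < s := by nlinarith
    refine ⟨⟨by positivity, by rw [div_lt_one hs]; linarith, rfl, ?_⟩, ?_⟩
    · field_simp
      norm_num
    · intro h8 t₁ t₂ h1 h2 h3 h4 heq1 heq2
      have hγω8 : γ ^ 2 * ω ≤ 8 := by
        rw [le_div_iff₀ (by positivity)] at h8; linarith [h8]
      have hs8 : s ^ 2 ≤ 8 := by linarith [hs2]
      have hsum : s * (t₁ * t₂) = t₁ + t₂ := by
        field_simp at heq2
        linarith [heq2]
      have hfact : (t₁ ^ 2 - t₂ ^ 2) * (1 - t₁ ^ 2 - t₂ ^ 2) = 0 := by ring_nf; nlinarith [heq1]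
      have hteq : t₁ = t₂ := by
        rcases mul_eq_zero.mp hfact with hc | hc
        · have : t₁ ^ 2 = t₂ ^ 2 := by linarith
          nlinarith
        · have hone : t₁ ^ 2 + t₂ ^ 2 = 1 := by linarith
          -- s² (t₁t₂)² = (t₁+t₂)² = 1 + 2 t₁ t₂ and s² ≤ 8 force t₁ t₂ ≥ 1/2
          have hsq2 : (t₁ + t₂) ^ 2 = s ^ 2 * (t₁ * t₂) ^ 2 := by
            rw [← hsum]; ring
          have hkey : (t₁ + t₂) ^ 2 ≤ 8 * (t₁ * t₂) ^ 2 := by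
            have hm : 0 ≤ (8 - s ^ 2) * (t₁ * t₂) ^ 2 :=
              mul_nonneg (by linarith) (sq_nonneg _)
            linarith [hm, hsq2]
          have h8p : 1 + 2 * (t₁ * t₂) ≤ 8 * (t₁ * t₂) ^ 2 := by
            have e : (t₁ + t₂) ^ 2 = t₁ ^ 2 + t₂ ^ 2 + 2 * (t₁ * t₂) := by ring
            linarith [hkey, hone, e]
          have hp : 1 / 2 ≤ t₁ * t₂ := by
            by_contra hcon
            push_neg at hcon
            have hpp : 0 < t₁ * t₂ := mul_pos h1 h3
            have : (t₁ * t₂) * (t₁ * t₂) < (1/2) * (t₁ * t₂) :=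
              mul_lt_mul_of_pos_right hcon hpp
            nlinarith [h8p, this, hpp]
          have hzero : (t₁ - t₂) ^ 2 = 0 := by
            have e : (t₁ - t₂) ^ 2 = t₁ ^ 2 + t₂ ^ 2 - 2 * (t₁ * t₂) := by ring
            have := sq_nonneg (t₁ - t₂)
            linarith [hone, hp, e]
          have := pow_eq_zero_iff (n := 2) (by norm_num) |>.mp hzero
          linarith [this]
      subst hteq
      have ht : t₁ = 2 / s := by
        have h2t : 2 = s * t₁ := by
          field_simp at heq2
          linarith [heq2]
        field_simp [h2t]
        linarith [h2t]
      exact ⟨ht, ht⟩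

end
end

section
/- Let γ > 0 and ω > 8/γ². Set t₊ := (1 + √(1 + γ²ω) + √(γ²ω − 2 − 2√(1 + γ²ω)))/(2γ√ω) and t₋ := (1 + √(1 + γ²ω) − √(γ²ω − 2 − 2√(1 + γ²ω)))/(2γ√ω). Then the set of solutions (t₁, t₂) with 0 < t₁ < 1, 0 < t₂ < 1 of the system t₁² − t₁⁴ = t₂² − t₂⁴, 1/t₁ + 1/t₂ = γ√ω is exactly {(2/(γ√ω), 2/(γ√ω)), (t₊, t₋), (t₋, t₊)}; in particular t₊² + t₋² = 1 and 0 < t₋ < t₊ < 1. -/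
open Real

noncomputable section

set_option maxHeartbeats 1000000

/-- For ω > 8/γ², the solution set of the system T₋ with 0 < t₁ < 1, 0 < t₂ < 1 consists
exactly of the symmetric solution (2/(γ√ω), 2/(γ√ω)) and the asymmetric pair (t₊, t₋), (t₋, t₊);
moreover t₊² + t₋² = 1 and 0 < t₋ < t₊ < 1. -/
theorem statement6 (γ ω : ℝ) (hγ : 0 < γ) (hω : 8 / γ ^ 2 < ω)
    (tp tm : ℝ)
    (htp : tp = (1 + Real.sqrt (1 + γ ^ 2 * ω)
        + Real.sqrt (γ ^ 2 * ω - 2 - 2 * Real.sqrt (1 + γ ^ 2 * ω)))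
      / (2 * γ * Real.sqrt ω))
    (htm : tm = (1 + Real.sqrt (1 + γ ^ 2 * ω)
        - Real.sqrt (γ ^ 2 * ω - 2 - 2 * Real.sqrt (1 + γ ^ 2 * ω)))
      / (2 * γ * Real.sqrt ω)) :
    {p : ℝ × ℝ | 0 < p.1 ∧ p.1 < 1 ∧ 0 < p.2 ∧ p.2 < 1 ∧
        p.1 ^ 2 - p.1 ^ 4 = p.2 ^ 2 - p.2 ^ 4 ∧ 1 / p.1 + 1 / p.2 = γ * Real.sqrt ω}
      = {(2 / (γ * Real.sqrt ω), 2 / (γ * Real.sqrt ω)), (tp, tm), (tm, tp)} ∧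
    tp ^ 2 + tm ^ 2 = 1 ∧ 0 < tm ∧ tm < tp ∧ tp < 1 := by
  have hω0 : 0 < ω := lt_trans (by positivity) hω
  set s : ℝ := γ * Real.sqrt ω with hsdef
  have hs0 : 0 < s := mul_pos hγ (Real.sqrt_pos.mpr hω0)
  have hs2 : s ^ 2 = γ ^ 2 * ω := by
    rw [hsdef, mul_pow, Real.sq_sqrt hω0.le]
  have h8 : 8 < s ^ 2 := by
    rw [hs2]
    have := (div_lt_iff₀ (by positivity : (0:ℝ) < γ ^ 2)).mp hω
    nlinarith
  set u : ℝ := Real.sqrt (1 + γ ^ 2 * ω) with hudef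
  have hu2 : u ^ 2 = 1 + s ^ 2 := by
    rw [hudef, Real.sq_sqrt (by nlinarith : (0:ℝ) ≤ 1 + γ ^ 2 * ω), hs2]
  have hu0 : 0 ≤ u := Real.sqrt_nonneg _
  have hu3 : 3 < u := by nlinarith
  set d : ℝ := Real.sqrt (γ ^ 2 * ω - 2 - 2 * u) with hddef
  have hinner : γ ^ 2 * ω - 2 - 2 * u = u ^ 2 - 2 * u - 3 := by
    rw [← hs2]; linarith [hu2]
  have hd2 : d ^ 2 = u ^ 2 - 2 * u - 3 := by
    rw [hddef, Real.sq_sqrt (by rw [hinner]; nlinarith : (0:ℝ) ≤ γ ^ 2 * ω - 2 - 2 * u)]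
    exact hinner
  have hd0 : 0 < d := by
    rw [hddef]
    apply Real.sqrt_pos.mpr
    rw [hinner]; nlinarith
  have htp' : tp = (1 + u + d) / (2 * s) := by rw [htp, hsdef]; ring_nf
  have htm' : tm = (1 + u - d) / (2 * s) := by rw [htm, hsdef]; ring_nf
  have hd1u : d < 1 + u := by nlinarith
  have ha : 2 * s * tp = 1 + u + d := by
    rw [htp', mul_div_assoc', mul_comm, mul_div_assoc]
    rw [div_self (by positivity : (2*s:ℝ) ≠ 0), mul_one]
  have hb : 2 * s * tm = 1 + u - d := by
    rw [htm', mul_div_assoc', mul_comm, mul_div_assoc]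
    rw [div_self (by positivity : (2*s:ℝ) ≠ 0), mul_one]
  -- key facts about tp, tm
  have hsum : tp + tm = (u + 1) / s := by
    rw [eq_div_iff hs0.ne']
    linear_combination ha / 2 + hb / 2
  have hprod : tp * tm = (u + 1) / s ^ 2 := by
    rw [eq_div_iff (by positivity : (s:ℝ)^2 ≠ 0)]
    linear_combination (s * tm / 2) * ha + ((1 + u + d) / 4) * hb - hd2 / 4
  have hpyth : tp ^ 2 + tm ^ 2 = 1 := by
    have h5 : (4 * s ^ 2) * (tp ^ 2 + tm ^ 2) = (4 * s ^ 2) * 1 := by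
      linear_combination (2 * s * tp + (1 + u + d)) * ha
        + (2 * s * tm + (1 + u - d)) * hb + 2 * hd2 + 4 * hu2
    exact mul_left_cancel₀ (ne_of_gt (by nlinarith [pow_pos hs0 2] : (0:ℝ) < 4 * s ^ 2)) h5
  have htm0 : 0 < tm := by
    rw [htm']
    exact div_pos (by linarith) (by linarith)
  have hlt : tm < tp := by
    nlinarith [ha, hb, hd0, hs0]
  have htp0 : 0 < tp := lt_trans htm0 hlt
  have htp1 : tp < 1 := by nlinarith
  have htm1 : tm < 1 := lt_trans hlt htp1
  refine ⟨?_, hpyth, htm0, hlt, htp1⟩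
  have hx : s * (tp * tm) = tp + tm := by
    rw [hprod, hsum, pow_two, ← div_div, mul_div_assoc']
    rw [mul_comm s, mul_div_assoc, div_self hs0.ne', mul_one]
  -- equation 2 for (tp, tm)
  have heq2 : 1 / tp + 1 / tm = s := by
    rw [div_add_div _ _ htp0.ne' htm0.ne',
      div_eq_iff (mul_ne_zero htp0.ne' htm0.ne')]
    linarith [hx]
  ext ⟨t₁, t₂⟩
  simp only [Set.mem_setOf_eq, Set.mem_insert_iff, Set.mem_singleton_iff, Prod.mk.injEq]
  constructor
  · rintro ⟨h1, h2, h3, h4, he, hf⟩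
    have hfac : (t₁ - t₂) * ((t₁ + t₂) * (1 - t₁ ^ 2 - t₂ ^ 2)) = 0 := by
      linear_combination he
    rcases mul_eq_zero.mp hfac with h | h
    · -- symmetric case
      have ht12 : t₁ = t₂ := by linarith [sub_eq_zero.mp h]
      left
      subst ht12
      have h0 : t₁ ≠ 0 := h1.ne'
      field_simp [h0] at hf
      have ht1 : t₁ = 2 / s := by
        rw [eq_div_iff hs0.ne']
        linarith
      exact ⟨ht1, ht1⟩
    · rcases mul_eq_zero.mp h with h | h
      · nlinarith
      · -- asymmetric case : t₁² + t₂² = 1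
        have hc : t₁ ^ 2 + t₂ ^ 2 = 1 := by linarith [sub_eq_zero.mp h]
        have hst : t₁ + t₂ = s * (t₁ * t₂) := by
          field_simp [h1.ne', h3.ne'] at hf
          linear_combination hf
        have hP0 : 0 < t₁ * t₂ := mul_pos h1 h3
        have hPq : s ^ 2 * (t₁ * t₂) ^ 2 = 1 + 2 * (t₁ * t₂) := by
          linear_combination (-(t₁ + t₂ + s * (t₁ * t₂))) * hst + hc
        have hq2 : s ^ 2 * ((u + 1) / s ^ 2) = u + 1 := by
          rw [mul_div_assoc', mul_comm, mul_div_assoc, div_self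
            (by positivity : (s:ℝ)^2 ≠ 0), mul_one]
        have hqeq : s ^ 2 * ((u + 1) / s ^ 2) ^ 2 = 1 + 2 * ((u + 1) / s ^ 2) := by
          have h7 : s ^ 2 * (s ^ 2 * ((u + 1) / s ^ 2) ^ 2)
              = s ^ 2 * (1 + 2 * ((u + 1) / s ^ 2)) := by
            linear_combination (s ^ 2 * ((u + 1) / s ^ 2) + (u + 1) - 2) * hq2 + hu2
          exact mul_left_cancel₀ (by positivity : (s:ℝ)^2 ≠ 0) h7
        have hkey : t₁ * t₂ = (u + 1) / s ^ 2 := by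
          by_contra hne
          have hfac2 : (t₁ * t₂ - (u + 1) / s ^ 2) *
              (s ^ 2 * (t₁ * t₂ + (u + 1) / s ^ 2) - 2) = 0 := by
            linear_combination hPq - hqeq
          rcases mul_eq_zero.mp hfac2 with h' | h'
          · exact hne (by linarith [sub_eq_zero.mp h'])
          · have h'' : s ^ 2 * (t₁ * t₂) + s ^ 2 * ((u + 1) / s ^ 2) = 2 := by
              linear_combination h'
            rw [hq2] at h''
            have := mul_pos (by positivity : (0:ℝ) < s ^ 2) hP0
            linarith
        have hprod' : t₁ * t₂ = tp * tm := by rw [hkey, ← hprod]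
        have hsum' : t₁ + t₂ = tp + tm := by rw [hst, hprod', hx]
        have hroot : (t₁ - tp) * (t₁ - tm) = 0 := by
          linear_combination t₁ * hsum' - hprod'
        rcases mul_eq_zero.mp hroot with h' | h'
        · right; left
          have h1p : t₁ = tp := by linarith [sub_eq_zero.mp h']
          exact ⟨h1p, by linarith⟩
        · right; right
          have h1m : t₁ = tm := by linarith [sub_eq_zero.mp h']
          exact ⟨h1m, by linarith⟩
  · rintro (⟨ha', hb'⟩ | ⟨ha', hb'⟩ | ⟨ha', hb'⟩) <;> subst ha' <;> subst hb'
    · have hs2' : 2 < s := by nlinarith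
      refine ⟨by positivity, by rw [div_lt_one hs0]; linarith, by positivity,
        by rw [div_lt_one hs0]; linarith, rfl, ?_⟩
      rw [one_div_div]
      ring
    · exact ⟨htp0, htp1, htm0, htm1, by linear_combination (t₂^2 - t₁^2) * hpyth, heq2⟩
    · exact ⟨htm0, htm1, htp0, htp1, by linear_combination (t₂^2 - t₁^2) * hpyth,
        by linarith [heq2]⟩

end
end

section
/- Let γ > 0, λ > 0, ω > 0, and let (t₁, t₂) be given by t₁ = (1 − √(1 + γ²ω) + √(γ²ω − 2 + 2√(1 + γ²ω)))/(2γ√ω), t₂ = (−1 + √(1 + γ²ω) + √(γ²ω − 2 + 2√(1 + γ²ω)))/(2γ√ω). Set x₁ := (1/(2√ω))·log((1 + t₁)/(1 − t₁)) and x₂ := (1/(2√ω))·log((1 + t₂)/(1 − t₂)), and define ψ(x) := √(2ω/λ)·sech(√ω(x − x₁)) for x < 0 and ψ(x) := √(2ω/λ)·sech(√ω(x − x₂)) for x > 0. Then ψ satisfies −ψ''(x) + ωψ(x) − λψ(x)³ = 0 for all x ≠ 0, ψ'(0+) = ψ'(0−), and ψ(0+) − ψ(0−) = −γψ'(0+);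 i.e., ψ is a (positive, asymmetric) stationary state of the cubic NLS with a delta-prime interaction of strength γ. -/
open MeasureTheory Real Filter Set Topology

noncomputable section

private lemma eq_of_sq_eq' {a b : ℝ} (ha : 0 < a) (hb : 0 < b) (h : a ^ 2 = b ^ 2) : a = b := by
  nlinarith [sq_nonneg (a - b)]

private lemma hasDerivAt_solF (A s c x : ℝ) :
    HasDerivAt (fun y => A * sech (s * (y - c)))
      (-(A * s) * (Real.sinh (s * (x - c)) / Real.cosh (s * (x - c)) ^ 2)) x := by
  have h1 : HasDerivAt (fun y : ℝ => s * (y - c)) s x := by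
    simpa using ((hasDerivAt_id x).sub_const c).const_mul s
  have h2 : HasDerivAt (fun y => Real.cosh (s * (y - c))) (Real.sinh (s * (x - c)) * s) x :=
    (Real.hasDerivAt_cosh _).comp x h1
  have h3 := (h2.inv (Real.cosh_pos (x := s * (x - c))).ne').const_mul A
  have hfe : (fun y => A * sech (s * (y - c))) = fun y => A * (Real.cosh (s * (y - c)))⁻¹ := by
    funext y; simp [sech, one_div]
  rw [hfe]
  refine h3.congr_deriv (Eq.symm ?_)
  have hc := (Real.cosh_pos (x := s * (x - c))).ne'
  field_simp

private lemma hasDerivAt_solF' (A s c x : ℝ) :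
    HasDerivAt (fun y => -(A * s) * (Real.sinh (s * (y - c)) / Real.cosh (s * (y - c)) ^ 2))
      (A * s ^ 2 * ((Real.cosh (s * (x - c)) ^ 2 - 2) / Real.cosh (s * (x - c)) ^ 3)) x := by
  have h1 : HasDerivAt (fun y : ℝ => s * (y - c)) s x := by
    simpa using ((hasDerivAt_id x).sub_const c).const_mul s
  have hsinh : HasDerivAt (fun y => Real.sinh (s * (y - c))) (Real.cosh (s * (x - c)) * s) x :=
    (Real.hasDerivAt_sinh _).comp x h1
  have hcosh : HasDerivAt (fun y => Real.cosh (s * (y - c))) (Real.sinh (s * (x - c)) * s) x :=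
    (Real.hasDerivAt_cosh _).comp x h1
  have hcosh2 : HasDerivAt (fun y => Real.cosh (s * (y - c)) ^ 2)
      (2 * Real.cosh (s * (x - c)) ^ 1 * (Real.sinh (s * (x - c)) * s)) x := hcosh.pow 2
  have hdiv := (hsinh.div hcosh2 (by positivity)).const_mul (-(A * s))
  refine hdiv.congr_deriv (Eq.symm ?_)
  have hc := (Real.cosh_pos (x := s * (x - c))).ne'
  have hs2 : Real.sinh (s * (x - c)) ^ 2 = Real.cosh (s * (x - c)) ^ 2 - 1 := by
    nlinarith [Real.cosh_sq_sub_sinh_sq (s * (x - c))]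
  field_simp
  linear_combination (-(2 * A * s ^ 2)) * hs2

private lemma lt_one_of_sq {x y : ℝ} (hx : 0 < x) (hy : 0 < y) (h : x ^ 2 + y ^ 2 = 1) :
    x < 1 := by nlinarith

private lemma cosh_sinh_halflog (a t u : ℝ) (ha : 0 < a) (htp : 0 < t) (htl : t < 1)
    (hup : 0 < u) (hsu : t ^ 2 + u ^ 2 = 1) :
    Real.cosh (a * ((1 / (2 * a)) * Real.log ((1 + t) / (1 - t)))) = 1 / u ∧
    Real.sinh (a * ((1 / (2 * a)) * Real.log ((1 + t) / (1 - t)))) = t / u := by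
  set y : ℝ := a * ((1 / (2 * a)) * Real.log ((1 + t) / (1 - t))) with hy
  have h1t : (0:ℝ) < 1 - t := by linarith
  have hr : (0:ℝ) < (1 + t) / (1 - t) := by positivity
  have h2y : 2 * y = Real.log ((1 + t) / (1 - t)) := by
    rw [hy]; field_simp
  have he2 : Real.exp y ^ 2 = (1 + t) / (1 - t) := by
    rw [← Real.exp_nat_mul]
    push_cast
    rw [h2y, Real.exp_log hr]
  have he : Real.exp y = u / (1 - t) := by
    apply eq_of_sq_eq' (Real.exp_pos y) (by positivity)
    rw [he2, div_pow]
    rw [div_eq_div_iff (by positivity) (by positivity)]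
    nlinarith
  constructor
  · rw [Real.cosh_eq, Real.exp_neg, he]
    rw [div_eq_div_iff (by norm_num) hup.ne']
    field_simp
    nlinarith
  · rw [Real.sinh_eq, Real.exp_neg, he]
    rw [div_eq_div_iff (by norm_num) hup.ne']
    field_simp
    nlinarith

private lemma ode_calc (A a ω lam c : ℝ) (hc : 0 < c) (ha2 : a ^ 2 = ω)
    (hlamA : lam * A ^ 2 = 2 * ω) :
    -(A * a ^ 2 * ((c ^ 2 - 2) / c ^ 3)) + ω * (A * (1 / c)) - lam * (A * (1 / c)) ^ 3 = 0 := by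
  have hcne : c ≠ 0 := hc.ne'
  field_simp
  linear_combination (A * (2 - c ^ 2)) * ha2 - A * hlamA

set_option maxHeartbeats 1000000 in
/-- The asymmetric non-sign-changing stationary state of the cubic NLS with a delta-prime
interaction of strength γ: it solves −ψ'' + ωψ − λψ³ = 0 away from the origin, and satisfies
ψ'(0+) = ψ'(0−) and ψ(0+) − ψ(0−) = −γψ'(0+). -/
theorem statement8 (γ lam ω : ℝ) (hγ : 0 < γ) (hlam : 0 < lam) (hω : 0 < ω)
    (t₁ t₂ x₁ x₂ : ℝ)
    (ht₁ : t₁ = (1 - Real.sqrt (1 + γ ^ 2 * ω)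
        + Real.sqrt (γ ^ 2 * ω - 2 + 2 * Real.sqrt (1 + γ ^ 2 * ω)))
      / (2 * γ * Real.sqrt ω))
    (ht₂ : t₂ = (-1 + Real.sqrt (1 + γ ^ 2 * ω)
        + Real.sqrt (γ ^ 2 * ω - 2 + 2 * Real.sqrt (1 + γ ^ 2 * ω)))
      / (2 * γ * Real.sqrt ω))
    (hx₁ : x₁ = (1 / (2 * Real.sqrt ω)) * Real.log ((1 + t₁) / (1 - t₁)))
    (hx₂ : x₂ = (1 / (2 * Real.sqrt ω)) * Real.log ((1 + t₂) / (1 - t₂)))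
    (ψ : ℝ → ℝ)
    (hψ : ∀ x, ψ x = if x < 0
      then Real.sqrt (2 * ω / lam) * sech (Real.sqrt ω * (x - x₁))
      else Real.sqrt (2 * ω / lam) * sech (Real.sqrt ω * (x - x₂))) :
    (∀ x : ℝ, x ≠ 0 → -(deriv (deriv ψ) x) + ω * ψ x - lam * (ψ x) ^ 3 = 0) ∧
    (∃ d : ℝ,
      Tendsto (deriv ψ) (𝓝[>] 0) (𝓝 d) ∧
      Tendsto (deriv ψ) (𝓝[<] 0) (𝓝 d) ∧
      ∃ p m : ℝ,
        Tendsto ψ (𝓝[>] 0) (𝓝 p) ∧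
        Tendsto ψ (𝓝[<] 0) (𝓝 m) ∧
        p - m = -γ * d) := by
  set a : ℝ := Real.sqrt ω with ha_def
  have ha : 0 < a := Real.sqrt_pos.mpr hω
  have ha2 : a ^ 2 = ω := Real.sq_sqrt hω.le
  set A : ℝ := Real.sqrt (2 * ω / lam) with hA_def
  have hA : 0 < A := Real.sqrt_pos.mpr (by positivity)
  have hA2 : A ^ 2 = 2 * ω / lam := Real.sq_sqrt (by positivity)
  have hlamA : lam * A ^ 2 = 2 * ω := by rw [hA2]; field_simp
  -- algebraic facts about t₁ t₂
  set S : ℝ := Real.sqrt (1 + γ ^ 2 * ω) with hS_def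
  have hS2 : S ^ 2 = 1 + γ ^ 2 * ω := Real.sq_sqrt (by positivity)
  have hS0 : 0 ≤ S := Real.sqrt_nonneg _
  have hgw : 0 < γ ^ 2 * ω := by positivity
  have hS1 : 1 < S := by nlinarith [hS0, hgw, hS2]
  have hRarg : 0 ≤ γ ^ 2 * ω - 2 + 2 * S := by nlinarith
  set R : ℝ := Real.sqrt (γ ^ 2 * ω - 2 + 2 * S) with hR_def
  have hR2 : R ^ 2 = γ ^ 2 * ω - 2 + 2 * S := Real.sq_sqrt hRarg
  have hR0 : 0 ≤ R := Real.sqrt_nonneg _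
  have hRgt : S - 1 < R := by nlinarith
  have hga : γ ^ 2 * ω = (γ * a) ^ 2 := by rw [mul_pow, ha2]
  have hden : (0:ℝ) < 2 * γ * a := by positivity
  have ht1pos : 0 < t₁ := by rw [ht₁]; exact div_pos (by linarith) hden
  have ht2pos : 0 < t₂ := by rw [ht₂]; exact div_pos (by nlinarith) hden
  have hsum : t₁ ^ 2 + t₂ ^ 2 = 1 := by
    rw [ht₁, ht₂, div_pow, div_pow, ← add_div]
    rw [div_eq_one_iff_eq (by positivity)]
    linear_combination 2 * hR2 + 2 * hS2 + 4 * hga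
  have ht1lt : t₁ < 1 := lt_one_of_sq ht1pos ht2pos hsum
  have ht2lt : t₂ < 1 := lt_one_of_sq ht2pos ht1pos (by linarith)
  have hjump : t₂ - t₁ = γ * a * (t₁ * t₂) := by
    rw [ht₁, ht₂]
    field_simp
    linear_combination hS2 - hR2
  -- hyperbolic values at a * x₁ and a * x₂
  have hvals : ∀ t u : ℝ, 0 < t → t < 1 → 0 < u → t ^ 2 + u ^ 2 = 1 →
      Real.cosh (a * ((1 / (2 * a)) * Real.log ((1 + t) / (1 - t)))) = 1 / u ∧
      Real.sinh (a * ((1 / (2 * a)) * Real.log ((1 + t) / (1 - t)))) = t / u :=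
    fun t u htp htl hup hsu => cosh_sinh_halflog a t u ha htp htl hup hsu
  have hax₁ : a * x₁ = a * ((1 / (2 * a)) * Real.log ((1 + t₁) / (1 - t₁))) := by rw [hx₁]
  have hax₂ : a * x₂ = a * ((1 / (2 * a)) * Real.log ((1 + t₂) / (1 - t₂))) := by rw [hx₂]
  obtain ⟨hc₁, hs₁⟩ := hvals t₁ t₂ ht1pos ht1lt ht2pos hsum
  obtain ⟨hc₂, hs₂⟩ := hvals t₂ t₁ ht2pos ht2lt ht1pos (by linarith)
  rw [← hax₁] at hc₁ hs₁
  rw [← hax₂] at hc₂ hs₂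
  -- branch functions
  set fL : ℝ → ℝ := fun y => A * sech (a * (y - x₁)) with hfL
  set fR : ℝ → ℝ := fun y => A * sech (a * (y - x₂)) with hfR
  set fL' : ℝ → ℝ := fun y => -(A * a) * (Real.sinh (a * (y - x₁)) / Real.cosh (a * (y - x₁)) ^ 2)
    with hfL'
  set fR' : ℝ → ℝ := fun y => -(A * a) * (Real.sinh (a * (y - x₂)) / Real.cosh (a * (y - x₂)) ^ 2)
    with hfR'
  have hdL : ∀ y, HasDerivAt fL (fL' y) y := fun y => hasDerivAt_solF A a x₁ y
  have hdR : ∀ y, HasDerivAt fR (fR' y) y := fun y => hasDerivAt_solF A a x₂ y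
  have hdL' : ∀ y, HasDerivAt fL'
      (A * a ^ 2 * ((Real.cosh (a * (y - x₁)) ^ 2 - 2) / Real.cosh (a * (y - x₁)) ^ 3)) y :=
    fun y => hasDerivAt_solF' A a x₁ y
  have hdR' : ∀ y, HasDerivAt fR'
      (A * a ^ 2 * ((Real.cosh (a * (y - x₂)) ^ 2 - 2) / Real.cosh (a * (y - x₂)) ^ 3)) y :=
    fun y => hasDerivAt_solF' A a x₂ y
  have hψL : ∀ y ∈ Iio (0:ℝ), ψ y = fL y := by
    intro y hy; rw [hψ y, if_pos (show y < 0 from hy)]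
  have hψR : ∀ y ∈ Ioi (0:ℝ), ψ y = fR y := by
    intro y hy; rw [hψ y, if_neg (not_lt.mpr (le_of_lt hy))]
  have hevL : ∀ y : ℝ, y < 0 → ψ =ᶠ[nhds y] fL := fun y hy =>
    eventually_of_mem (Iio_mem_nhds hy) hψL
  have hevR : ∀ y : ℝ, 0 < y → ψ =ᶠ[nhds y] fR := fun y hy =>
    eventually_of_mem (Ioi_mem_nhds hy) hψR
  have hderivL : ∀ y : ℝ, y < 0 → deriv ψ y = fL' y := by
    intro y hy
    rw [(hevL y hy).deriv_eq, (hdL y).deriv]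
  have hderivR : ∀ y : ℝ, 0 < y → deriv ψ y = fR' y := by
    intro y hy
    rw [(hevR y hy).deriv_eq, (hdR y).deriv]
  have hode : ∀ B : ℝ, lam * B ^ 3 = ω * B * 2 - A ^ 2 * lam * B → True := fun _ _ => trivial
  refine ⟨?_, ?_⟩
  · -- the ODE away from zero
    intro x hx
    rcases hx.lt_or_gt with hx | hx
    · have hev2 : deriv ψ =ᶠ[nhds x] fL' := by
        filter_upwards [Iio_mem_nhds hx] with y hy using hderivL y hy
      have h2 : deriv (deriv ψ) x = A * a ^ 2 *
          ((Real.cosh (a * (x - x₁)) ^ 2 - 2) / Real.cosh (a * (x - x₁)) ^ 3) := by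
        rw [hev2.deriv_eq, (hdL' x).deriv]
      rw [h2, hψL x hx, hfL]
      simp only [sech]
      exact ode_calc A a ω lam _ (Real.cosh_pos _) ha2 hlamA
    · have hev2 : deriv ψ =ᶠ[nhds x] fR' := by
        filter_upwards [Ioi_mem_nhds hx] with y hy using hderivR y hy
      have h2 : deriv (deriv ψ) x = A * a ^ 2 *
          ((Real.cosh (a * (x - x₂)) ^ 2 - 2) / Real.cosh (a * (x - x₂)) ^ 3) := by
        rw [hev2.deriv_eq, (hdR' x).deriv]
      rw [h2, hψR x hx, hfR]
      simp only [sech]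
      exact ode_calc A a ω lam _ (Real.cosh_pos _) ha2 hlamA
  · -- boundary conditions
    refine ⟨A * a * (t₁ * t₂), ?_, ?_, A * t₁, A * t₂, ?_, ?_, ?_⟩
    · -- deriv ψ → d from the right
      have hval : fR' 0 = A * a * (t₁ * t₂) := by
        rw [hfR']
        simp only
        rw [show a * ((0:ℝ) - x₂) = -(a * x₂) by ring, Real.sinh_neg, Real.cosh_neg, hc₂, hs₂]
        have h1 : t₁ ≠ 0 := ht1pos.ne'
        field_simp
      have h1 : Tendsto fR' (𝓝[>] (0:ℝ)) (nhds (fR' 0)) :=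
        ((hdR' 0).continuousAt.continuousWithinAt)
      rw [hval] at h1
      refine h1.congr' ?_
      filter_upwards [self_mem_nhdsWithin] with y hy using (hderivR y hy).symm
    · -- deriv ψ → d from the left
      have hval : fL' 0 = A * a * (t₁ * t₂) := by
        rw [hfL']
        simp only
        rw [show a * ((0:ℝ) - x₁) = -(a * x₁) by ring, Real.sinh_neg, Real.cosh_neg, hc₁, hs₁]
        have h1 : t₂ ≠ 0 := ht2pos.ne'
        field_simp
      have h1 : Tendsto fL' (𝓝[<] (0:ℝ)) (nhds (fL' 0)) :=
        ((hdL' 0).continuousAt.continuousWithinAt)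
      rw [hval] at h1
      refine h1.congr' ?_
      filter_upwards [self_mem_nhdsWithin] with y hy using (hderivL y hy).symm
    · -- ψ → p from the right
      have hval : fR 0 = A * t₁ := by
        rw [hfR]
        simp only [sech, one_div]
        rw [show a * ((0:ℝ) - x₂) = -(a * x₂) by ring, Real.cosh_neg, hc₂]
        have h1 : t₁ ≠ 0 := ht1pos.ne'
        field_simp
      have h1 : Tendsto fR (𝓝[>] (0:ℝ)) (nhds (fR 0)) :=
        ((hdR 0).continuousAt.continuousWithinAt)
      rw [hval] at h1
      refine h1.congr' ?_
      filter_upwards [self_mem_nhdsWithin] with y hy using (hψR y hy).symm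
    · -- ψ → m from the left
      have hval : fL 0 = A * t₂ := by
        rw [hfL]
        simp only [sech, one_div]
        rw [show a * ((0:ℝ) - x₁) = -(a * x₁) by ring, Real.cosh_neg, hc₁]
        have h1 : t₂ ≠ 0 := ht2pos.ne'
        field_simp
      have h1 : Tendsto fL (𝓝[<] (0:ℝ)) (nhds (fL 0)) :=
        ((hdL 0).continuousAt.continuousWithinAt)
      rw [hval] at h1
      refine h1.congr' ?_
      filter_upwards [self_mem_nhdsWithin] with y hy using (hψL y hy).symm
    · -- the jump condition
      have : A * t₁ - A * t₂ = -(A * (t₂ - t₁)) := by ring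
      rw [this, hjump]
      ring
end
end

section
/- Let γ > 0, λ > 0 and ω > 4/γ². Set x̄ := (1/(2√ω))·log((γ√ω + 2)/(γ√ω − 2)) and define ψ(x) := −√(2ω/λ)·sech(√ω(x − x̄)) for x < 0 and ψ(x) := √(2ω/λ)·sech(√ω(x + x̄)) for x > 0. Then ψ satisfies −ψ''(x) + ωψ(x) − λψ(x)³ = 0 for all x ≠ 0, ψ'(0+) = ψ'(0−), and ψ(0+) − ψ(0−) = −γψ'(0+); i.e., ψ is an antisymmetric stationary state of the cubic NLS with a delta-prime interaction of strength γ. -/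
open MeasureTheory Real Filter Set Topology

noncomputable section

lemma aux_deriv1 (A b d : ℝ) (x : ℝ) :
    HasDerivAt (fun y => A / Real.cosh (b*(y+d)))
      (-(A * b) * Real.sinh (b*(x+d)) / Real.cosh (b*(x+d)) ^ 2) x := by
  have h1 : HasDerivAt (fun y : ℝ => b*(y+d)) b x := by
    simpa using ((hasDerivAt_id x).add_const d).const_mul b
  have h2 : HasDerivAt (fun y => Real.cosh (b*(y+d))) (Real.sinh (b*(x+d)) * b) x :=
    (Real.hasDerivAt_cosh _).comp x h1
  have h3 := (hasDerivAt_const x A).div h2 (Real.cosh_pos _).ne'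
  exact h3.congr_deriv (by ring)

lemma aux_deriv2 (A b d : ℝ) (x : ℝ) :
    HasDerivAt (fun y => -(A * b) * Real.sinh (b*(y+d)) / Real.cosh (b*(y+d)) ^ 2)
      (A * b^2 * (2 * Real.sinh (b*(x+d))^2 - Real.cosh (b*(x+d))^2) / Real.cosh (b*(x+d)) ^ 3) x := by
  have h1 : HasDerivAt (fun y : ℝ => b*(y+d)) b x := by
    simpa using ((hasDerivAt_id x).add_const d).const_mul b
  have hs : HasDerivAt (fun y => -(A*b) * Real.sinh (b*(y+d))) (-(A*b) * (Real.cosh (b*(x+d)) * b)) x :=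
    ((Real.hasDerivAt_sinh _).comp x h1).const_mul _
  have hc := (((Real.hasDerivAt_cosh _).comp x h1)).pow 2
  have h := hs.div hc (pow_ne_zero 2 (Real.cosh_pos _).ne')
  refine h.congr_deriv ?_
  have hco : Real.cosh (b*(x+d)) ≠ 0 := (Real.cosh_pos _).ne'
  simp only [Function.comp_apply, Pi.pow_apply]
  field_simp
  ring

lemma ode_algebra (A b ω lam u : ℝ) (hb2 : b^2 = ω) (hA2 : lam * A^2 = 2*ω) :
    -(A*b^2*(2*Real.sinh u^2 - Real.cosh u^2)/Real.cosh u^3) + ω * (A / Real.cosh u) - lam * (A / Real.cosh u)^3 = 0 := by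
  have hc : Real.cosh u ≠ 0 := (Real.cosh_pos _).ne'
  have hid : Real.cosh u ^ 2 = Real.sinh u ^2 + 1 := Real.cosh_sq u
  field_simp
  linear_combination (-A) * ((2*Real.sinh u^2 - Real.cosh u^2) * hb2 +
    hA2 - 2*ω * hid)

lemma key_bc (s t : ℝ) (hs : 2 < s) (ht : Real.exp t ^ 2 = (s+2)/(s-2)) :
    s * Real.sinh t = 2 * Real.cosh t := by
  have hE : (0:ℝ) < Real.exp t := Real.exp_pos t
  have hs2 : s - 2 ≠ 0 := by linarith
  have hE2 : Real.exp t ^ 2 * (s - 2) = s + 2 := by rw [ht]; field_simp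
  rw [Real.sinh_eq, Real.cosh_eq, Real.exp_neg]
  field_simp
  linear_combination hE2

lemma cont_prof (A b d : ℝ) : Continuous (fun y => A / Real.cosh (b*(y+d))) := by
  have h : Continuous fun y : ℝ => b*(y+d) := by fun_prop
  exact continuous_const.div (Real.continuous_cosh.comp h) fun y => (Real.cosh_pos _).ne'

lemma cont_prof1 (A b d : ℝ) :
    Continuous (fun y => -(A * b) * Real.sinh (b*(y+d)) / Real.cosh (b*(y+d)) ^ 2) := by
  have h : Continuous fun y : ℝ => b*(y+d) := by fun_prop
  exact (continuous_const.mul (Real.continuous_sinh.comp h)).div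
    ((Real.continuous_cosh.comp h).pow 2) fun y => pow_ne_zero 2 (Real.cosh_pos _).ne'

/-- The antisymmetric stationary state of the cubic NLS with a delta-prime interaction of
strength γ, for ω > 4/γ²: it solves −ψ'' + ωψ − λψ³ = 0 away from the origin, and satisfies
ψ'(0+) = ψ'(0−) and ψ(0+) − ψ(0−) = −γψ'(0+). -/
theorem statement9 (γ lam ω : ℝ) (hγ : 0 < γ) (hlam : 0 < lam) (hω : 4 / γ ^ 2 < ω)
    (xbar : ℝ)
    (hxbar : xbar = (1 / (2 * Real.sqrt ω)) *
      Real.log ((γ * Real.sqrt ω + 2) / (γ * Real.sqrt ω - 2)))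
    (ψ : ℝ → ℝ)
    (hψ : ∀ x, ψ x = if x < 0
      then -(Real.sqrt (2 * ω / lam) * sech (Real.sqrt ω * (x - xbar)))
      else Real.sqrt (2 * ω / lam) * sech (Real.sqrt ω * (x + xbar))) :
    (∀ x : ℝ, x ≠ 0 → -(deriv (deriv ψ) x) + ω * ψ x - lam * (ψ x) ^ 3 = 0) ∧
    (∃ d : ℝ,
      Tendsto (deriv ψ) (𝓝[>] 0) (𝓝 d) ∧
      Tendsto (deriv ψ) (𝓝[<] 0) (𝓝 d) ∧
      ∃ p m : ℝ,
        Tendsto ψ (𝓝[>] 0) (𝓝 p) ∧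
        Tendsto ψ (𝓝[<] 0) (𝓝 m) ∧
        p - m = -γ * d) := by
  have hω0 : 0 < ω := lt_trans (by positivity) hω
  set b := Real.sqrt ω with hb
  have hb0 : 0 < b := Real.sqrt_pos.2 hω0
  have hb2 : b ^ 2 = ω := Real.sq_sqrt hω0.le
  set A := Real.sqrt (2*ω/lam) with hA
  have hA0 : 0 < A := Real.sqrt_pos.2 (by positivity)
  have hA2 : lam * A ^ 2 = 2*ω := by
    rw [Real.sq_sqrt (by positivity : (0:ℝ) ≤ 2*ω/lam)]
    field_simp
  have hs2 : 2 < γ * b := by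
    have h1 : 4 < γ^2 * ω := by
      rw [div_lt_iff₀ (by positivity)] at hω; linarith [hω]
    have h2 : γ^2 * b^2 = γ^2 * ω := by rw [hb2]
    nlinarith [h2, mul_pos hγ hb0]
  -- the two explicit profiles
  set f : ℝ → ℝ := fun y => A / Real.cosh (b*(y + xbar)) with hf
  set g : ℝ → ℝ := fun y => (-A) / Real.cosh (b*(y + (-xbar))) with hg
  have hψf : ∀ x : ℝ, 0 ≤ x → ψ x = f x := by
    intro x hx
    rw [hψ x, if_neg (not_lt.2 hx)]
    simp only [hf, sech, mul_one_div]
  have hψg : ∀ x : ℝ, x < 0 → ψ x = g x := by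
    intro x hx
    rw [hψ x, if_pos hx]
    simp only [hg, sech, mul_one_div, sub_eq_add_neg, neg_div]
  -- first derivatives
  set f1 : ℝ → ℝ := fun y => -(A * b) * Real.sinh (b*(y+xbar)) / Real.cosh (b*(y+xbar)) ^ 2 with hf1
  set g1 : ℝ → ℝ := fun y => -((-A) * b) * Real.sinh (b*(y+(-xbar))) / Real.cosh (b*(y+(-xbar))) ^ 2 with hg1
  have hdf : deriv f = f1 := funext fun y => (aux_deriv1 A b xbar y).deriv
  have hdg : deriv g = g1 := funext fun y => (aux_deriv1 (-A) b (-xbar) y).deriv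
  -- eventual equalities near points away from 0
  have hefr : ∀ x : ℝ, 0 < x → ψ =ᶠ[𝓝 x] f := by
    intro x hx
    filter_upwards [Ioi_mem_nhds hx] with y hy
    exact hψf y (le_of_lt hy)
  have hefl : ∀ x : ℝ, x < 0 → ψ =ᶠ[𝓝 x] g := by
    intro x hx
    filter_upwards [Iio_mem_nhds hx] with y hy
    exact hψg y hy
  constructor
  · -- the ODE
    intro x hx
    rcases hx.lt_or_gt with hx | hx
    · have hev := hefl x hx
      have h2 : deriv (deriv ψ) x = deriv (deriv g) x := (hev.deriv.deriv).eq_of_nhds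
      rw [h2, hψg x hx, hdg]
      rw [(aux_deriv2 (-A) b (-xbar) x).deriv]
      exact ode_algebra (-A) b ω lam _ hb2 (by rw [neg_pow]; simpa using hA2)
    · have hev := hefr x hx
      have h2 : deriv (deriv ψ) x = deriv (deriv f) x := (hev.deriv.deriv).eq_of_nhds
      rw [h2, hψf x hx.le, hdf]
      rw [(aux_deriv2 A b xbar x).deriv]
      exact ode_algebra A b ω lam _ hb2 hA2
  · -- boundary conditions
    have hc0 : Real.cosh (b*xbar) ≠ 0 := (Real.cosh_pos _).ne'
    refine ⟨-(A * b) * Real.sinh (b*xbar) / Real.cosh (b*xbar) ^ 2, ?_, ?_,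
      A / Real.cosh (b*xbar), -(A / Real.cosh (b*xbar)), ?_, ?_, ?_⟩
    · -- right limit of deriv ψ
      have heq : deriv ψ =ᶠ[𝓝[>] (0:ℝ)] f1 := by
        filter_upwards [self_mem_nhdsWithin] with y hy
        rw [(hefr y hy).deriv_eq, hdf]
      have hcont : Continuous f1 := cont_prof1 A b xbar
      have : Tendsto f1 (𝓝[>] (0:ℝ)) (𝓝 (f1 0)) :=
        (hcont.tendsto 0).mono_left nhdsWithin_le_nhds
      refine Tendsto.congr' heq.symm (by simpa [hf1] using this)
    · -- left limit of deriv ψ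
      have heq : deriv ψ =ᶠ[𝓝[<] (0:ℝ)] g1 := by
        filter_upwards [self_mem_nhdsWithin] with y hy
        rw [(hefl y hy).deriv_eq, hdg]
      have hcont : Continuous g1 := cont_prof1 (-A) b (-xbar)
      have h0 : Tendsto g1 (𝓝[<] (0:ℝ)) (𝓝 (g1 0)) :=
        (hcont.tendsto 0).mono_left nhdsWithin_le_nhds
      have hval : g1 0 = -(A * b) * Real.sinh (b*xbar) / Real.cosh (b*xbar) ^ 2 := by
        simp only [hg1]
        rw [show b * ((0:ℝ) + -xbar) = -(b*xbar) by ring]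
        rw [Real.sinh_neg, Real.cosh_neg]
        ring
      refine Tendsto.congr' heq.symm (hval ▸ h0)
    · -- right limit of ψ
      have heq : ψ =ᶠ[𝓝[>] (0:ℝ)] f := by
        filter_upwards [self_mem_nhdsWithin] with y hy
        exact hψf y (le_of_lt hy)
      have hcont : Continuous f := cont_prof A b xbar
      have h0 : Tendsto f (𝓝[>] (0:ℝ)) (𝓝 (f 0)) :=
        (hcont.tendsto 0).mono_left nhdsWithin_le_nhds
      have hval : f 0 = A / Real.cosh (b*xbar) := by simp [hf]
      exact Tendsto.congr' heq.symm (hval ▸ h0)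
    · -- left limit of ψ
      have heq : ψ =ᶠ[𝓝[<] (0:ℝ)] g := by
        filter_upwards [self_mem_nhdsWithin] with y hy
        exact hψg y hy
      have hcont : Continuous g := cont_prof (-A) b (-xbar)
      have h0 : Tendsto g (𝓝[<] (0:ℝ)) (𝓝 (g 0)) :=
        (hcont.tendsto 0).mono_left nhdsWithin_le_nhds
      have hval : g 0 = -(A / Real.cosh (b*xbar)) := by
        simp only [hg]
        rw [show b * ((0:ℝ) + -xbar) = -(b*xbar) by ring, Real.cosh_neg]
        ring
      exact Tendsto.congr' heq.symm (hval ▸ h0)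
    · -- the jump condition
      have ht : Real.exp (b*xbar) ^ 2 = (γ*b + 2)/(γ*b - 2) := by
        have hr : (0:ℝ) < (γ*b + 2)/(γ*b - 2) := by
          apply div_pos <;> linarith
        have h2t : 2 * (b*xbar) = Real.log ((γ*b + 2)/(γ*b - 2)) := by
          rw [hxbar]; field_simp
        rw [← Real.exp_nat_mul]
        push_cast
        rw [h2t, Real.exp_log hr]
      have hkey : γ * b * Real.sinh (b*xbar) = 2 * Real.cosh (b*xbar) :=
        key_bc (γ*b) (b*xbar) hs2 ht
      field_simp
      linear_combination (-1 : ℝ) * hkey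

end
end

section
/- Let γ > 0, λ > 0 and ω > 8/γ². Set t₁ := (1 + √(1 + γ²ω) + √(γ²ω − 2 − 2√(1 + γ²ω)))/(2γ√ω), t₂ := (1 + √(1 + γ²ω) − √(γ²ω − 2 − 2√(1 + γ²ω)))/(2γ√ω), x̄₁ := (1/(2√ω))·log((1 + t₁)/(1 − t₁)), x̄₂ := −(1/(2√ω))·log((1 + t₂)/(1 − t₂)), and define ψ(x) := √(2ω/λ)·sech(√ω(x − x̄₁)) for x < 0 and ψ(x) := −√(2ω/λ)·sech(√ω(x − x̄₂)) for x > 0. Then ψ satisfies −ψ''(x) + ωψ(x) − λψ(x)³ = 0 for all x ≠ 0, ψ'(0+) = ψ'(0−), and ψ(0+) − ψ(0−) = −γψ'(0+); i.e., ψ is a sign-changing asymmetric stationary state of the cubic NLS with a delta-prime interaction of strength γ. -/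
open MeasureTheory Real Filter Set Topology

noncomputable section

lemma coshsinh_half_log (a b : ℝ) (hb : 0 < b) (ha : a < 1) (hab : a^2 + b^2 = 1) :
    Real.cosh ((1/2) * Real.log ((1+a)/(1-a))) = 1/b ∧
    Real.sinh ((1/2) * Real.log ((1+a)/(1-a))) = a/b := by
  have ha1 : -1 < a := by nlinarith
  have h1a : 0 < 1 - a := by linarith
  have h1a' : 0 < 1 + a := by linarith
  set q := (1+a)/(1-a) with hq
  have hqpos : 0 < q := div_pos h1a' h1a
  set u := (1/2) * Real.log q with hu
  have hE2 : Real.exp u ^ 2 = q := by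
    rw [sq, ← Real.exp_add, hu,
      show (1/2) * Real.log q + (1/2) * Real.log q = Real.log q by ring]
    exact Real.exp_log hqpos
  have hE : Real.exp u = Real.sqrt q := by
    rw [← hE2, Real.sqrt_sq (Real.exp_pos u).le]
  have hbq : b^2 * q = (1+a)^2 := by
    rw [hq]; field_simp; linear_combination hab
  have hbq2 : (1-a)^2 * q = b^2 := by
    rw [hq]; field_simp; linear_combination -hab
  have hEb : b * Real.exp u = 1 + a := by
    rw [hE, ← Real.sqrt_sq hb.le, ← Real.sqrt_mul (sq_nonneg b), hbq,
      Real.sqrt_sq h1a'.le]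
  have hEb2 : (1-a) * Real.exp u = b := by
    rw [hE, ← Real.sqrt_sq h1a.le, ← Real.sqrt_mul (sq_nonneg _), hbq2,
      Real.sqrt_sq hb.le]
  have hEpos := Real.exp_pos u
  constructor
  · rw [Real.cosh_eq, Real.exp_neg, eq_div_iff hb.ne']
    field_simp
    linear_combination (Real.exp u) * hEb - hEb2
  · rw [Real.sinh_eq, Real.exp_neg, eq_div_iff hb.ne']
    field_simp
    linear_combination (Real.exp u) * hEb + hEb2

lemma hasDerivAt_sol (A k a x : ℝ) :
    HasDerivAt (fun y => A / Real.cosh (k*(y-a)))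
      (-(A * k * Real.sinh (k*(x-a))) / Real.cosh (k*(x-a))^2) x := by
  have hlin : HasDerivAt (fun y : ℝ => k*(y-a)) k x := by
    simpa using ((hasDerivAt_id x).sub_const a).const_mul k
  have hcosh : HasDerivAt (fun y => Real.cosh (k*(y-a))) (Real.sinh (k*(x-a)) * k) x :=
    (Real.hasDerivAt_cosh _).comp x hlin
  have hne : Real.cosh (k*(x-a)) ≠ 0 := (Real.cosh_pos _).ne'
  have h := (hasDerivAt_const x A).div hcosh hne
  refine h.congr_deriv ?_
  ring

lemma hasDerivAt_sol' (A k a x : ℝ) :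
    HasDerivAt (fun y => -(A * k * Real.sinh (k*(y-a))) / Real.cosh (k*(y-a))^2)
      (-(A * k^2) * (Real.cosh (k*(x-a))^2 - 2*Real.sinh (k*(x-a))^2)
        / Real.cosh (k*(x-a))^3) x := by
  have hlin : HasDerivAt (fun y : ℝ => k*(y-a)) k x := by
    simpa using ((hasDerivAt_id x).sub_const a).const_mul k
  have hsinh : HasDerivAt (fun y => Real.sinh (k*(y-a))) (Real.cosh (k*(x-a)) * k) x :=
    (Real.hasDerivAt_sinh _).comp x hlin
  have hcosh : HasDerivAt (fun y => Real.cosh (k*(y-a))) (Real.sinh (k*(x-a)) * k) x :=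
    (Real.hasDerivAt_cosh _).comp x hlin
  have hnum : HasDerivAt (fun y => -(A * k * Real.sinh (k*(y-a))))
      (-(A * k * (Real.cosh (k*(x-a)) * k))) x := by
    simpa [mul_assoc, Pi.neg_def] using ((hsinh.const_mul (A*k)).neg)
  have hne : Real.cosh (k*(x-a)) ≠ 0 := (Real.cosh_pos _).ne'
  have h := hnum.div (hcosh.pow 2) (pow_ne_zero 2 hne)
  have hc := Real.cosh_pos (k*(x-a))
  refine h.congr_deriv ?_
  simp only [Pi.pow_apply]
  rw [div_eq_div_iff (by positivity) (by positivity)]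
  ring

set_option maxHeartbeats 1000000 in
/-- The sign-changing asymmetric stationary state of the cubic NLS with a delta-prime
interaction of strength γ, for ω > 8/γ²: it solves −ψ'' + ωψ − λψ³ = 0 away from the origin,
and satisfies ψ'(0+) = ψ'(0−) and ψ(0+) − ψ(0−) = −γψ'(0+). -/
theorem statement10 (γ lam ω : ℝ) (hγ : 0 < γ) (hlam : 0 < lam) (hω : 8 / γ ^ 2 < ω)
    (t₁ t₂ xbar₁ xbar₂ : ℝ)
    (ht₁ : t₁ = (1 + Real.sqrt (1 + γ ^ 2 * ω)
        + Real.sqrt (γ ^ 2 * ω - 2 - 2 * Real.sqrt (1 + γ ^ 2 * ω)))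
      / (2 * γ * Real.sqrt ω))
    (ht₂ : t₂ = (1 + Real.sqrt (1 + γ ^ 2 * ω)
        - Real.sqrt (γ ^ 2 * ω - 2 - 2 * Real.sqrt (1 + γ ^ 2 * ω)))
      / (2 * γ * Real.sqrt ω))
    (hxbar₁ : xbar₁ = (1 / (2 * Real.sqrt ω)) * Real.log ((1 + t₁) / (1 - t₁)))
    (hxbar₂ : xbar₂ = -(1 / (2 * Real.sqrt ω)) * Real.log ((1 + t₂) / (1 - t₂)))
    (ψ : ℝ → ℝ)
    (hψ : ∀ x, ψ x = if x < 0
      then Real.sqrt (2 * ω / lam) * sech (Real.sqrt ω * (x - xbar₁))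
      else -(Real.sqrt (2 * ω / lam) * sech (Real.sqrt ω * (x - xbar₂)))) :
    (∀ x : ℝ, x ≠ 0 → -(deriv (deriv ψ) x) + ω * ψ x - lam * (ψ x) ^ 3 = 0) ∧
    (∃ d : ℝ,
      Tendsto (deriv ψ) (𝓝[>] 0) (𝓝 d) ∧
      Tendsto (deriv ψ) (𝓝[<] 0) (𝓝 d) ∧
      ∃ p m : ℝ,
        Tendsto ψ (𝓝[>] 0) (𝓝 p) ∧
        Tendsto ψ (𝓝[<] 0) (𝓝 m) ∧
        p - m = -γ * d) := by

  have hγ2 : 0 < γ^2 := by positivity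
  have hω0 : 0 < ω := lt_trans (div_pos (by norm_num) hγ2) hω
  set sq := Real.sqrt ω with hsq_def
  have hsqpos : 0 < sq := Real.sqrt_pos.mpr hω0
  have hsq2 : sq^2 = ω := Real.sq_sqrt hω0.le
  set A := Real.sqrt (2 * ω / lam) with hA_def
  have hA2 : A^2 = 2*ω/lam := Real.sq_sqrt (by positivity)
  have hA2' : lam * A^2 = 2*ω := by rw [hA2]; field_simp
  set c := γ * sq with hc_def
  have hcpos : 0 < c := mul_pos hγ hsqpos
  have hc2 : c^2 = γ^2*ω := by rw [hc_def, mul_pow, hsq2]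
  have hc8 : 8 < c^2 := by
    rw [hc2]
    rw [div_lt_iff₀ hγ2] at hω
    calc (8:ℝ) < ω * γ^2 := hω
    _ = γ^2 * ω := by ring
  set s := Real.sqrt (1 + γ^2*ω) with hs_def
  have hs2 : s^2 = 1 + c^2 := by
    rw [hs_def, Real.sq_sqrt (by positivity), hc2]
  have hspos : 0 < s := Real.sqrt_pos.mpr (by positivity)
  have hrad : 0 < c^2 - 2 - 2*s := by
    have hkey0 : (c^2-2-2*s)*(c^2-2+2*s) = c^2*(c^2-8) := by
      linear_combination (-4)*hs2
    have hQ : 0 < c^2-2+2*s := by linarith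
    have hPQ : 0 < (c^2-2-2*s)*(c^2-2+2*s) := by
      rw [hkey0]; exact mul_pos (by positivity) (by linarith)
    rcases mul_pos_iff.mp hPQ with ⟨h,_⟩ | ⟨_,h⟩
    · exact h
    · linarith
  set r := Real.sqrt (γ^2*ω - 2 - 2*s) with hr_def
  have hr2 : r^2 = c^2 - 2 - 2*s := by
    rw [hr_def, ← hc2]
    exact Real.sq_sqrt (by rw [hc2] at hrad; linarith)
  have hrpos : 0 ≤ r := Real.sqrt_nonneg _
  have h2c : (2 * γ * sq) = 2*c := by rw [hc_def]; ring
  rw [h2c] at ht₁ ht₂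
  clear_value sq A c s r
  -- algebraic facts about t₁, t₂
  have hsum : t₁ + t₂ = (1+s)/c := by
    rw [ht₁, ht₂]; field_simp; ring
  have hprod : t₁ * t₂ = (1+s)/c^2 := by
    rw [ht₁, ht₂, div_mul_div_comm,
      show (1+s+r)*(1+s-r) = 4*(1+s) by linear_combination hs2 - hr2,
      show (2*c)*(2*c) = 4*c^2 by ring,
      mul_div_mul_left _ _ (by norm_num : (4:ℝ) ≠ 0)]
  have hpyth : t₁^2 + t₂^2 = 1 := by
    rw [ht₁, ht₂, div_pow, div_pow, ← add_div,
      div_eq_one_iff_eq (by positivity)]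
    linear_combination 2*hs2 + 2*hr2
  have ht1pos : 0 < t₁ := by
    rw [ht₁]
    exact div_pos (by linarith) (by linarith)
  have hrlt1s : r < 1 + s := by
    have h1 : r^2 < (1+s)^2 := by
      have h2 : (1+s)^2 - r^2 = 4 + 4*s := by linear_combination hs2 - hr2
      linarith
    exact lt_of_pow_lt_pow_left₀ 2 (by linarith) h1
  have ht2pos : 0 < t₂ := by
    rw [ht₂]
    exact div_pos (by linarith) (by linarith)
  have hsc : c < s := lt_of_pow_lt_pow_left₀ 2 hspos.le (by linarith [hs2])
  have hcgt2 : 2 < c := by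
    have h1 : (2:ℝ)^2 < c^2 := by norm_num; linarith
    exact lt_of_pow_lt_pow_left₀ 2 hcpos.le h1
  have h2c1s : 1 + s < 2*c := by
    have hident : (2*c-1)^2 - s^2 = 2*(c*(c-2)) + c^2 := by linear_combination -hs2
    have h2 : 0 < c*(c-2) := mul_pos hcpos (by linarith)
    have h3 : s^2 < (2*c-1)^2 := by linarith [hident, h2, mul_pos hcpos hcpos]
    have h4 : s < 2*c-1 := lt_of_pow_lt_pow_left₀ 2 (by linarith) h3
    linarith
  have hkey : (2*c-1-s)^2 - r^2 = 4*(s+1)*(s-c) := by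
    linear_combination (-3)*hs2 - hr2
  have hB : 0 < 2*c-1-s := by linarith
  have hr2lt : r^2 < (2*c-1-s)^2 := by
    have hpos4 : 0 < 4*(s+1)*(s-c) :=
      mul_pos (show (0:ℝ) < 4*(s+1) by linarith) (show (0:ℝ) < s-c by linarith)
    linarith [hkey, hpos4]
  have hrlt : r < 2*c-1-s := lt_of_pow_lt_pow_left₀ 2 hB.le hr2lt
  have ht1lt1 : t₁ < 1 := by
    rw [ht₁, div_lt_one (by linarith)]
    linarith
  have ht2lt1 : t₂ < 1 := by
    have h1 : t₂^2 < 1^2 := by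
      have h2 := pow_pos ht1pos 2
      rw [one_pow]; linarith [hpyth]
    exact lt_of_pow_lt_pow_left₀ 2 (by norm_num) h1
  obtain ⟨hC1, hS1⟩ := coshsinh_half_log t₁ t₂ ht2pos ht1lt1 hpyth
  obtain ⟨hC2, hS2⟩ := coshsinh_half_log t₂ t₁ ht1pos ht2lt1 (by linarith)
  -- angles at 0
  have hang1 : sq * ((0:ℝ) - xbar₁) = -((1/2) * Real.log ((1+t₁)/(1-t₁))) := by
    rw [hxbar₁]; field_simp; ring
  have hang2 : sq * ((0:ℝ) - xbar₂) = (1/2) * Real.log ((1+t₂)/(1-t₂)) := by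
    rw [hxbar₂]; field_simp; ring
  -- pointwise descriptions of ψ
  have hmemL : ∀ y ∈ Iio (0:ℝ), ψ y = A / Real.cosh (sq*(y - xbar₁)) := by
    intro y hy
    rw [hψ y, if_pos (show y < 0 from hy)]; simp only [sech]; rw [mul_one_div]
  have hmemR : ∀ y ∈ Ioi (0:ℝ), ψ y = -(A / Real.cosh (sq*(y - xbar₂))) := by
    intro y hy
    rw [hψ y, if_neg (not_lt.mpr (le_of_lt hy))]; simp only [sech]; rw [mul_one_div]
  have hevL : ∀ y ∈ Iio (0:ℝ), ψ =ᶠ[𝓝 y] (fun z => A / Real.cosh (sq*(z - xbar₁))) := by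
    intro y hy
    filter_upwards [Iio_mem_nhds hy] with z hz using hmemL z hz
  have hevR : ∀ y ∈ Ioi (0:ℝ), ψ =ᶠ[𝓝 y] (fun z => -(A / Real.cosh (sq*(z - xbar₂)))) := by
    intro y hy
    filter_upwards [Ioi_mem_nhds hy] with z hz using hmemR z hz
  have hdL : ∀ y ∈ Iio (0:ℝ), deriv ψ y
      = -(A * sq * Real.sinh (sq*(y-xbar₁))) / Real.cosh (sq*(y-xbar₁))^2 := by
    intro y hy
    rw [(hevL y hy).deriv_eq]
    exact (hasDerivAt_sol A sq xbar₁ y).deriv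
  have hdR : ∀ y ∈ Ioi (0:ℝ), deriv ψ y
      = -(-(A * sq * Real.sinh (sq*(y-xbar₂))) / Real.cosh (sq*(y-xbar₂))^2) := by
    intro y hy
    rw [(hevR y hy).deriv_eq]
    exact ((hasDerivAt_sol A sq xbar₂ y).neg).deriv
  constructor
  · intro x hx0
    rcases lt_or_gt_of_ne hx0 with hx | hx
    · have hder : deriv ψ =ᶠ[𝓝 x]
          (fun y => -(A * sq * Real.sinh (sq*(y-xbar₁))) / Real.cosh (sq*(y-xbar₁))^2) := by
        filter_upwards [Iio_mem_nhds hx] with y hy using hdL y hy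
      have h2 : deriv (deriv ψ) x
          = -(A * sq^2) * (Real.cosh (sq*(x-xbar₁))^2 - 2*Real.sinh (sq*(x-xbar₁))^2)
            / Real.cosh (sq*(x-xbar₁))^3 := by
        rw [hder.deriv_eq]
        exact (hasDerivAt_sol' A sq xbar₁ x).deriv
      rw [h2, hmemL x hx]
      have hCpos := Real.cosh_pos (sq*(x - xbar₁))
      have hid := Real.cosh_sq (sq*(x - xbar₁))
      field_simp
      linear_combination (2*A*sq^2)*hid
        - (A*(Real.cosh (sq*(x - xbar₁))^2 - 2))*hsq2 - A*hA2'
    · have hder : deriv ψ =ᶠ[𝓝 x]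
          (fun y => -(-(A * sq * Real.sinh (sq*(y-xbar₂))) / Real.cosh (sq*(y-xbar₂))^2)) := by
        filter_upwards [Ioi_mem_nhds hx] with y hy using hdR y hy
      have h2 : deriv (deriv ψ) x
          = -(-(A * sq^2) * (Real.cosh (sq*(x-xbar₂))^2 - 2*Real.sinh (sq*(x-xbar₂))^2)
            / Real.cosh (sq*(x-xbar₂))^3) := by
        rw [hder.deriv_eq]
        exact ((hasDerivAt_sol' A sq xbar₂ x).neg).deriv
      rw [h2, hmemR x hx]
      have hCpos := Real.cosh_pos (sq*(x - xbar₂))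
      have hid := Real.cosh_sq (sq*(x - xbar₂))
      field_simp
      linear_combination (-(2*A*sq^2))*hid
        + (A*(Real.cosh (sq*(x - xbar₂))^2 - 2))*hsq2 + A*hA2'
  · refine ⟨A*sq*(t₁*t₂), ?_, ?_, -(A*t₁), A*t₂, ?_, ?_, ?_⟩
    · -- deriv from the right
      have hcont : ContinuousAt
          (fun y => -(-(A * sq * Real.sinh (sq*(y-xbar₂))) / Real.cosh (sq*(y-xbar₂))^2)) 0 :=
        ((hasDerivAt_sol' A sq xbar₂ 0).neg).continuousAt
      have h1 := hcont.tendsto.mono_left (nhdsWithin_le_nhds (s := Ioi (0:ℝ)))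
      have hval : -(-(A * sq * Real.sinh (sq*((0:ℝ)-xbar₂))) / Real.cosh (sq*((0:ℝ)-xbar₂))^2)
          = A*sq*(t₁*t₂) := by
        rw [hang2, hS2, hC2]
        field_simp
      rw [hval] at h1
      refine h1.congr' ?_
      filter_upwards [self_mem_nhdsWithin] with y hy using (hdR y hy).symm
    · -- deriv from the left
      have hcont : ContinuousAt
          (fun y => -(A * sq * Real.sinh (sq*(y-xbar₁))) / Real.cosh (sq*(y-xbar₁))^2) 0 :=
        (hasDerivAt_sol' A sq xbar₁ 0).continuousAt
      have h1 := hcont.tendsto.mono_left (nhdsWithin_le_nhds (s := Iio (0:ℝ)))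
      have hval : -(A * sq * Real.sinh (sq*((0:ℝ)-xbar₁))) / Real.cosh (sq*((0:ℝ)-xbar₁))^2
          = A*sq*(t₁*t₂) := by
        rw [hang1, Real.sinh_neg, Real.cosh_neg, hS1, hC1]
        field_simp
      rw [hval] at h1
      refine h1.congr' ?_
      filter_upwards [self_mem_nhdsWithin] with y hy using (hdL y hy).symm
    · -- ψ from the right
      have hcont : ContinuousAt (fun y => -(A / Real.cosh (sq*(y - xbar₂)))) 0 :=
        ((hasDerivAt_sol A sq xbar₂ 0).neg).continuousAt
      have h1 := hcont.tendsto.mono_left (nhdsWithin_le_nhds (s := Ioi (0:ℝ)))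
      have hval : -(A / Real.cosh (sq*((0:ℝ) - xbar₂))) = -(A*t₁) := by
        rw [hang2, hC2]
        field_simp
      rw [hval] at h1
      refine h1.congr' ?_
      filter_upwards [self_mem_nhdsWithin] with y hy using (hmemR y hy).symm
    · -- ψ from the left
      have hcont : ContinuousAt (fun y => A / Real.cosh (sq*(y - xbar₁))) 0 :=
        (hasDerivAt_sol A sq xbar₁ 0).continuousAt
      have h1 := hcont.tendsto.mono_left (nhdsWithin_le_nhds (s := Iio (0:ℝ)))
      have hval : A / Real.cosh (sq*((0:ℝ) - xbar₁)) = A*t₂ := by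
        rw [hang1, Real.cosh_neg, hC1]
        field_simp
      rw [hval] at h1
      refine h1.congr' ?_
      filter_upwards [self_mem_nhdsWithin] with y hy using (hmemL y hy).symm
    · -- jump condition
      have hcc : c*(t₁*t₂) = t₁ + t₂ := by
        rw [hsum, hprod]; field_simp
      have hgsq : γ * sq = c := hc_def.symm
      linear_combination A*hcc + (A*(t₁*t₂))*hgsq

end
end
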